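/- arXiv:1005.0453 — 8 statements merged into one kernel-verified Lean document; each statement's English description precedes it below -/
import Mathlib

section
/- Let a < b be real numbers and let f : ℝ → ℝ be twice differentiable on an open interval containing [a,b] with f'' Lebesgue integrable on [a,b]. Let c, y, d be real numbers with 0 ≤ c ≤ y ≤ d ≤ 1 and 0 < y < 1. Then E(f;a,b;c,y,d) = (b−a)² · ( ∫_0^y ((c−t)²/2) · f''(t·a+(1−t)·b) dt + ∫_y^1 ((d−t)²/2) · f''(t·a+(1−t)·b) dt ). -/
open MeasureTheory intervalIntegral Set

set_option maxHeartbeats 1000000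

/-- Lemma (Sarikaya–Saglam–Yildirim): integral identity for twice differentiable
functions. `f` is twice differentiable on an open interval `(u, v)` containing
`[a, b]`, with derivative `f'` and second derivative `f''`, and `f''` is
Lebesgue integrable on `[a, b]`. -/
theorem stmt_0 (f f' f'' : ℝ → ℝ) (a b u v c y d : ℝ) (hab : a < b)
    (hua : u < a) (hbv : b < v)
    (hf' : ∀ x ∈ Set.Ioo u v, HasDerivAt f (f' x) x)
    (hf'' : ∀ x ∈ Set.Ioo u v, HasDerivAt f' (f'' x) x)
    (hint : IntervalIntegrable f'' MeasureTheory.volume a b)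
    (hc : 0 ≤ c) (hcy : c ≤ y) (hyd : y ≤ d) (hd : d ≤ 1)
    (hy0 : 0 < y) (hy1 : y < 1) :
    (((c - y) ^ 2 - (d - y) ^ 2) / 2) * (a - b) * f' (y * a + (1 - y) * b)
      + (((d - 1) ^ 2 * f' a - c ^ 2 * f' b) / 2) * (a - b)
      + (c - d) * f (y * a + (1 - y) * b)
      + (d - 1) * f a - c * f b
      + (1 / (b - a)) * ∫ x in a..b, f x
    = (b - a) ^ 2 *
        ((∫ t in (0:ℝ)..y, ((c - t) ^ 2 / 2) * f'' (t * a + (1 - t) * b))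
          + ∫ t in y..(1:ℝ), ((d - t) ^ 2 / 2) * f'' (t * a + (1 - t) * b)) := by
  have hA : a - b ≠ 0 := by linarith
  have hmem : ∀ t ∈ Set.Icc (0:ℝ) 1, t * a + (1 - t) * b ∈ Set.Ioo u v := by
    intro t ht
    constructor
    · nlinarith [ht.1, ht.2]
    · nlinarith [ht.1, ht.2]
  have hgd : ∀ t : ℝ, HasDerivAt (fun t : ℝ => t * a + (1 - t) * b) (a - b) t := by
    intro t
    have h1 := ((hasDerivAt_id t).mul_const a).add
      (((hasDerivAt_const t (1:ℝ)).sub (hasDerivAt_id t)).mul_const b)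
    exact h1.congr_deriv (by ring)
  have hF' : ∀ t ∈ Set.Icc (0:ℝ) 1,
      HasDerivAt (fun s => f' (s * a + (1 - s) * b)) ((a - b) * f'' (t * a + (1 - t) * b)) t := by
    intro t ht
    have := (hf'' _ (hmem t ht)).comp t (hgd t)
    simpa [mul_comm, Function.comp_def] using this
  have hF : ∀ t ∈ Set.Icc (0:ℝ) 1,
      HasDerivAt (fun s => f (s * a + (1 - s) * b)) ((a - b) * f' (t * a + (1 - t) * b)) t := by
    intro t ht
    have := (hf' _ (hmem t ht)).comp t (hgd t)
    simpa [mul_comm, Function.comp_def] using this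
  have hy01 : Set.uIcc (0:ℝ) y ⊆ Set.Icc 0 1 := by
    rw [Set.uIcc_of_le hy0.le]; exact Set.Icc_subset_Icc le_rfl hy1.le
  have hy11 : Set.uIcc y (1:ℝ) ⊆ Set.Icc 0 1 := by
    rw [Set.uIcc_of_le hy1.le]; exact Set.Icc_subset_Icc hy0.le le_rfl
  have h011 : Set.uIcc (0:ℝ) 1 = Set.Icc 0 1 := Set.uIcc_of_le zero_le_one
  have hint01 : IntervalIntegrable (fun t => f'' (t * a + (1 - t) * b)) volume 0 1 := by
    have h1 : IntervalIntegrable (fun x => f'' (x + b)) volume (a - b) 0 := by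
      simpa using hint.comp_add_right b
    have h2 : IntervalIntegrable (fun x => f'' ((a - b) * x + b)) volume
        ((a - b) / (a - b)) (0 / (a - b)) := h1.comp_mul_left (c := a - b)
    rw [div_self hA, zero_div] at h2
    have h3 := h2.symm
    convert h3 using 2 with t
    ring_nf
  have hint0y : IntervalIntegrable (fun t => f'' (t * a + (1 - t) * b)) volume 0 y :=
    hint01.mono_set (by rw [h011]; exact hy01)
  have hinty1 : IntervalIntegrable (fun t => f'' (t * a + (1 - t) * b)) volume y 1 :=
    hint01.mono_set (by rw [h011]; exact hy11)
  have hcF' : ContinuousOn (fun t => f' (t * a + (1 - t) * b)) (Set.Icc (0:ℝ) 1) :=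
    fun t ht => (hF' t ht).continuousAt.continuousWithinAt
  have hcF : ContinuousOn (fun t => f (t * a + (1 - t) * b)) (Set.Icc (0:ℝ) 1) :=
    fun t ht => (hF t ht).continuousAt.continuousWithinAt
  have hiF0y : IntervalIntegrable (fun t => f (t * a + (1 - t) * b)) volume 0 y :=
    (hcF.mono hy01).intervalIntegrable
  have hiFy1 : IntervalIntegrable (fun t => f (t * a + (1 - t) * b)) volume y 1 :=
    (hcF.mono hy11).intervalIntegrable
  -- parts, first layer on [0,y]
  have hup : ∀ (k t : ℝ), HasDerivAt (fun t : ℝ => (k - t) ^ 2 / 2) (t - k) t := by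
    intro k t
    have h1 := (((hasDerivAt_const t k).sub (hasDerivAt_id t)).pow 2).div_const 2
    exact h1.congr_deriv (by simp only [Pi.sub_apply, id_eq]; ring)
  have e1 : ∫ t in (0:ℝ)..y, ((c - t) ^ 2 / 2) * ((a - b) * f'' (t * a + (1 - t) * b))
      = ((c - y) ^ 2 / 2) * f' (y * a + (1 - y) * b)
        - ((c - 0) ^ 2 / 2) * f' (0 * a + (1 - 0) * b)
        - ∫ t in (0:ℝ)..y, (t - c) * f' (t * a + (1 - t) * b) := by
    exact integral_mul_deriv_eq_deriv_mul (fun t _ => hup c t)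
      (fun t ht => hF' t (hy01 ht))
      ((Continuous.continuousOn (by continuity)).intervalIntegrable)
      (hint0y.const_mul (a - b))
  have e3 : ∫ t in y..(1:ℝ), ((d - t) ^ 2 / 2) * ((a - b) * f'' (t * a + (1 - t) * b))
      = ((d - 1) ^ 2 / 2) * f' (1 * a + (1 - 1) * b)
        - ((d - y) ^ 2 / 2) * f' (y * a + (1 - y) * b)
        - ∫ t in y..(1:ℝ), (t - d) * f' (t * a + (1 - t) * b) := by
    exact integral_mul_deriv_eq_deriv_mul (fun t _ => hup d t)
      (fun t ht => hF' t (hy11 ht))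
      ((Continuous.continuousOn (by continuity)).intervalIntegrable)
      (hinty1.const_mul (a - b))
  -- parts, second layer
  have e2 : ∫ t in (0:ℝ)..y, (t - c) * ((a - b) * f' (t * a + (1 - t) * b))
      = (y - c) * f (y * a + (1 - y) * b) - (0 - c) * f (0 * a + (1 - 0) * b)
        - ∫ t in (0:ℝ)..y, 1 * f (t * a + (1 - t) * b) := by
    exact integral_mul_deriv_eq_deriv_mul
      (u := fun t => t - c) (u' := fun _ => 1)
      (fun t _ => (hasDerivAt_id t).sub_const c)
      (fun t ht => hF t (hy01 ht))
      intervalIntegrable_const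
      (((hcF'.mono hy01).intervalIntegrable).const_mul (a - b))
  have e4 : ∫ t in y..(1:ℝ), (t - d) * ((a - b) * f' (t * a + (1 - t) * b))
      = (1 - d) * f (1 * a + (1 - 1) * b) - (y - d) * f (y * a + (1 - y) * b)
        - ∫ t in y..(1:ℝ), 1 * f (t * a + (1 - t) * b) := by
    exact integral_mul_deriv_eq_deriv_mul
      (u := fun t => t - d) (u' := fun _ => 1)
      (fun t _ => (hasDerivAt_id t).sub_const d)
      (fun t ht => hF t (hy11 ht))
      intervalIntegrable_const
      (((hcF'.mono hy11).intervalIntegrable).const_mul (a - b))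
  -- change of variables
  have e5 : ∫ t in (0:ℝ)..1, (a - b) • f (t * a + (1 - t) * b)
      = ∫ x in (0 * a + (1 - 0) * b)..(1 * a + (1 - 1) * b), f x := by
    exact integral_comp_smul_deriv' (fun t _ => hgd t) continuousOn_const
      (ContinuousOn.mono
        (fun x hx => (hf' x hx).continuousAt.continuousWithinAt)
        (by rintro _ ⟨t, ht, rfl⟩; exact hmem t (h011 ▸ ht)))
  -- clean up point values
  have hpt0 : (0:ℝ) * a + (1 - 0) * b = b := by ring
  have hpt1 : (1:ℝ) * a + (1 - 1) * b = a := by ring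
  rw [hpt0] at e1 e2 e5
  rw [hpt1] at e3 e4 e5
  -- pull out constants
  have p1 : ∫ t in (0:ℝ)..y, ((c - t) ^ 2 / 2) * ((a - b) * f'' (t * a + (1 - t) * b))
      = (a - b) * ∫ t in (0:ℝ)..y, ((c - t) ^ 2 / 2) * f'' (t * a + (1 - t) * b) := by
    rw [← intervalIntegral.integral_const_mul]; apply integral_congr; intro t _; ring
  have p3 : ∫ t in y..(1:ℝ), ((d - t) ^ 2 / 2) * ((a - b) * f'' (t * a + (1 - t) * b))
      = (a - b) * ∫ t in y..(1:ℝ), ((d - t) ^ 2 / 2) * f'' (t * a + (1 - t) * b) := by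
    rw [← intervalIntegral.integral_const_mul]; apply integral_congr; intro t _; ring
  have p2 : ∫ t in (0:ℝ)..y, (t - c) * ((a - b) * f' (t * a + (1 - t) * b))
      = (a - b) * ∫ t in (0:ℝ)..y, (t - c) * f' (t * a + (1 - t) * b) := by
    rw [← intervalIntegral.integral_const_mul]; apply integral_congr; intro t _; ring
  have p4 : ∫ t in y..(1:ℝ), (t - d) * ((a - b) * f' (t * a + (1 - t) * b))
      = (a - b) * ∫ t in y..(1:ℝ), (t - d) * f' (t * a + (1 - t) * b) := by
    rw [← intervalIntegral.integral_const_mul]; apply integral_congr; intro t _; ring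
  have p5 : ∫ t in (0:ℝ)..1, (a - b) • f (t * a + (1 - t) * b)
      = (a - b) * ∫ t in (0:ℝ)..1, f (t * a + (1 - t) * b) := by
    simp [intervalIntegral.integral_smul]
  rw [p1] at e1
  rw [p3] at e3
  rw [p2] at e2
  rw [p4] at e4
  rw [p5] at e5
  have psplit : ∫ t in (0:ℝ)..1, f (t * a + (1 - t) * b)
      = (∫ t in (0:ℝ)..y, f (t * a + (1 - t) * b))
        + ∫ t in y..(1:ℝ), f (t * a + (1 - t) * b) :=
    (integral_add_adjacent_intervals hiF0y hiFy1).symm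
  rw [psplit] at e5
  have hba : ∫ x in b..a, f x = - ∫ x in a..b, f x := integral_symm a b
  rw [hba] at e5
  -- simplify the `1 *` in e2, e4
  simp only [one_mul] at e2 e4
  have e5' : (1 / (b - a)) * ∫ x in a..b, f x
      = (∫ t in (0:ℝ)..y, f (t * a + (1 - t) * b))
        + ∫ t in y..(1:ℝ), f (t * a + (1 - t) * b) := by
    have hba' : b - a ≠ 0 := by linarith
    rw [one_div_mul_eq_div, div_eq_iff hba']
    nlinarith [e5]
  rw [e5']
  linear_combination (b - a) * e1 + (b - a) * e3 + e2 + e4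
end

section
/- Let a < b be real numbers and let f : ℝ → ℝ be twice differentiable on an open interval containing [a,b] with f'' Lebesgue integrable on [a,b]. Let c, y, d be real numbers with 0 ≤ c ≤ y ≤ d ≤ 1 and 0 < y < 1. If the function x ↦ |f''(x)| is convex on [a,b], then |E(f;a,b;c,y,d)| ≤ ((b−a)²/24)·(A·|f''(a)| + B·|f''(b)|), where A = 6d² − 8d + 3 + (6c² − 6d²)·y² + (8d − 8c)·y³ and B = 6d² − 4d + 1 + (12c² − 12d²)·y + (12d + 6d² − 12c − 6c²)·y² + (8c − 8d)·y³. -/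
open MeasureTheory intervalIntegral

lemma anti_hasDeriv (a b α β r x : ℝ) (hab : a < b) :
    HasDerivAt (fun t => (((b-r)*α+(r-a)*β) * (t-r)^3/3 + (β-α)*(t-r)^4/4)/(2*(b-a)))
      ((x-r)^2/2 * (((b-x)*α + (x-a)*β)/(b-a))) x := by
  have h3 : HasDerivAt (fun t : ℝ => (t-r)^3) (3*(x-r)^2) x := by
    simpa using ((hasDerivAt_id x).sub_const r).fun_pow 3
  have h4 : HasDerivAt (fun t : ℝ => (t-r)^4) (4*(x-r)^3) x := by
    simpa using ((hasDerivAt_id x).sub_const r).fun_pow 4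
  have h := (((h3.const_mul ((b-r)*α+(r-a)*β)).div_const 3).add
    ((h4.const_mul (β-α)).div_const 4)).div_const (2*(b-a))
  have : b - a ≠ 0 := by linarith
  exact h.congr_deriv (by field_simp; ring)

lemma kernel_integral (a b α β r p q : ℝ) (hab : a < b) :
    ∫ x in p..q, (x-r)^2/2 * (((b-x)*α + (x-a)*β)/(b-a))
      = (((b-r)*α+(r-a)*β) * (q-r)^3/3 + (β-α)*(q-r)^4/4)/(2*(b-a))
        - (((b-r)*α+(r-a)*β) * (p-r)^3/3 + (β-α)*(p-r)^4/4)/(2*(b-a)) := by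
  apply intervalIntegral.integral_eq_sub_of_hasDerivAt
    (fun x _ => anti_hasDeriv a b α β r x hab)
  apply Continuous.intervalIntegrable
  fun_prop

lemma ibp2 (f f' f'' : ℝ → ℝ) (u v p q r : ℝ)
    (hsub : Set.uIcc p q ⊆ Set.Ioo u v)
    (hf' : ∀ x ∈ Set.Ioo u v, HasDerivAt f (f' x) x)
    (hf'' : ∀ x ∈ Set.Ioo u v, HasDerivAt f' (f'' x) x)
    (hint : IntervalIntegrable f'' MeasureTheory.volume p q) :
    ∫ x in p..q, (x - r)^2/2 * f'' x
      = (q-r)^2/2 * f' q - (p-r)^2/2 * f' p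
        - ((q-r) * f q - (p-r) * f p - ∫ x in p..q, f x) := by
  have hcf' : ContinuousOn f' (Set.uIcc p q) := fun x hx =>
    ((hf'' x (hsub hx)).continuousAt).continuousWithinAt
  have h1 : ∫ x in p..q, (x - r)^2/2 * f'' x
      = (q-r)^2/2 * f' q - (p-r)^2/2 * f' p - ∫ x in p..q, (x - r) * f' x := by
    apply intervalIntegral.integral_mul_deriv_eq_deriv_mul
    · intro x _
      have h := (((hasDerivAt_id x).sub_const r).fun_pow 2).div_const 2
      convert h using 1
      all_goals simp only [id_eq]
      ring
    · intro x hx; exact hf'' x (hsub hx)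
    · exact (continuous_id.sub continuous_const).intervalIntegrable p q
    · exact hint
  have h2 : ∫ x in p..q, (x - r) * f' x
      = (q-r) * f q - (p-r) * f p - ∫ x in p..q, f x := by
    have h := intervalIntegral.integral_mul_deriv_eq_deriv_mul
      (u := fun x => x - r) (u' := fun _ => (1:ℝ)) (v := f) (v' := f')
      (fun x _ => (hasDerivAt_id x).sub_const r)
      (fun x hx => hf' x (hsub hx))
      intervalIntegrable_const
      ((hcf'.mono (le_refl _)).intervalIntegrable)
    simpa using h
  rw [h1, h2]

/-- Theorem 9 of the paper: if |f''| is convex on [a,b], then |E(f;a,b;c,y,d)| is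
bounded by ((b-a)²/24)(A|f''(a)| + B|f''(b)|). -/
theorem stmt_1 (f f' f'' : ℝ → ℝ) (a b u v c y d : ℝ) (hab : a < b)
(hua : u < a) (hbv : b < v)
    (hf' : ∀ x ∈ Set.Ioo u v, HasDerivAt f (f' x) x)
    (hf'' : ∀ x ∈ Set.Ioo u v, HasDerivAt f' (f'' x) x)
    (hint : IntervalIntegrable f'' MeasureTheory.volume a b)
    (hc : 0 ≤ c) (hcy : c ≤ y) (hyd : y ≤ d) (hd : d ≤ 1)
    (hy0 : 0 < y) (hy1 : y < 1)
    (hconv : ConvexOn ℝ (Set.Icc a b) (fun x => |f'' x|)) :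
|(((c - y) ^ 2 - (d - y) ^ 2) / 2) * (a - b) * f' (y * a + (1 - y) * b)
      + (((d - 1) ^ 2 * f' a - c ^ 2 * f' b) / 2) * (a - b)
      + (c - d) * f (y * a + (1 - y) * b)
      + (d - 1) * f a - c * f b
      + (1 / (b - a)) * ∫ x in a..b, f x|
    ≤ ((b - a) ^ 2 / 24) *
        ((6 * d ^ 2 - 8 * d + 3 + (6 * c ^ 2 - 6 * d ^ 2) * y ^ 2
            + (8 * d - 8 * c) * y ^ 3) * |f'' a|
          + (6 * d ^ 2 - 4 * d + 1 + (12 * c ^ 2 - 12 * d ^ 2) * y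
            + (12 * d + 6 * d ^ 2 - 12 * c - 6 * c ^ 2) * y ^ 2
            + (8 * c - 8 * d) * y ^ 3) * |f'' b|) := by
  have hL : (0:ℝ) < b - a := by linarith
  have hLne : b - a ≠ 0 := ne_of_gt hL
  set z := y * a + (1 - y) * b with hz
  set r1 := d * a + (1 - d) * b with hr1
  set r2 := c * a + (1 - c) * b with hr2
  have haz : a ≤ z := by
    rw [hz]; nlinarith [mul_nonneg (by linarith : (0:ℝ) ≤ 1 - y) (by linarith : (0:ℝ) ≤ b - a)]
  have hzb : z ≤ b := by
    rw [hz]; nlinarith [mul_nonneg hy0.le (by linarith : (0:ℝ) ≤ b - a)]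
  have hIccsub : Set.Icc a b ⊆ Set.Ioo u v := fun x hx =>
    ⟨lt_of_lt_of_le hua hx.1, lt_of_le_of_lt hx.2 hbv⟩
  have h1sub : Set.uIcc a z ⊆ Set.Icc a b := by
    rw [Set.uIcc_of_le haz]; exact Set.Icc_subset_Icc le_rfl hzb
  have h2sub : Set.uIcc z b ⊆ Set.Icc a b := by
    rw [Set.uIcc_of_le hzb]; exact Set.Icc_subset_Icc haz le_rfl
  have hint1 : IntervalIntegrable f'' MeasureTheory.volume a z :=
    hint.mono_set (by rw [Set.uIcc_of_le hab.le]; exact h1sub)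
  have hint2 : IntervalIntegrable f'' MeasureTheory.volume z b :=
    hint.mono_set (by rw [Set.uIcc_of_le hab.le]; exact h2sub)
  have hcf : ContinuousOn f (Set.Icc a b) := fun x hx =>
    ((hf' x (hIccsub hx)).continuousAt).continuousWithinAt
  have hf1 : IntervalIntegrable f MeasureTheory.volume a z := (hcf.mono h1sub).intervalIntegrable
  have hf2 : IntervalIntegrable f MeasureTheory.volume z b := (hcf.mono h2sub).intervalIntegrable
  have e1 := ibp2 f f' f'' u v a z r1 (fun x hx => hIccsub (h1sub hx)) hf' hf'' hint1
  have e2 := ibp2 f f' f'' u v z b r2 (fun x hx => hIccsub (h2sub hx)) hf' hf'' hint2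
  have hsplit := intervalIntegral.integral_add_adjacent_intervals hf1 hf2
  have key : (((c - y) ^ 2 - (d - y) ^ 2) / 2) * (a - b) * f' z
      + (((d - 1) ^ 2 * f' a - c ^ 2 * f' b) / 2) * (a - b)
      + (c - d) * f z + (d - 1) * f a - c * f b
      + (1 / (b - a)) * ∫ x in a..b, f x
      = (1/(b-a)) * ((∫ x in a..z, (x - r1)^2/2 * f'' x)
          + (∫ x in z..b, (x - r2)^2/2 * f'' x)) := by
    rw [e1, e2, ← hsplit]
    simp only [hz, hr1, hr2]
    field_simp
    ring
  have hcb : ∀ x ∈ Set.Icc a b, |f'' x| ≤ ((b-x)*|f'' a| + (x-a)*|f'' b|)/(b-a) := by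
    intro x hx
    have ht1 : 0 ≤ (b-x)/(b-a) := div_nonneg (by linarith [hx.2]) hL.le
    have ht2 : 0 ≤ (x-a)/(b-a) := div_nonneg (by linarith [hx.1]) hL.le
    have ht3 : (b-x)/(b-a) + (x-a)/(b-a) = 1 := by field_simp; ring
    have h := hconv.2 (Set.left_mem_Icc.2 hab.le) (Set.right_mem_Icc.2 hab.le) ht1 ht2 ht3
    simp only [smul_eq_mul] at h
    have hxeq : (b-x)/(b-a) * a + (x-a)/(b-a) * b = x := by field_simp; ring
    rw [hxeq] at h
    calc |f'' x| ≤ (b-x)/(b-a) * |f'' a| + (x-a)/(b-a) * |f'' b| := h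
    _ = ((b-x)*|f'' a| + (x-a)*|f'' b|)/(b-a) := by ring
  have bnd : ∀ (r p q : ℝ), a ≤ p → p ≤ q → q ≤ b →
      IntervalIntegrable f'' MeasureTheory.volume p q →
      |∫ x in p..q, (x - r)^2/2 * f'' x|
        ≤ ∫ x in p..q, (x - r)^2/2 * (((b-x)*|f'' a| + (x-a)*|f'' b|)/(b-a)) := by
    intro r p q hap hpq hqb hi
    refine le_trans (intervalIntegral.abs_integral_le_integral_abs hpq) ?_
    apply intervalIntegral.integral_mono_on hpq
    · exact (hi.continuousOn_mul
        ((by fun_prop : Continuous fun x : ℝ => (x - r)^2/2).continuousOn)).abs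
    · exact Continuous.intervalIntegrable (by fun_prop) p q
    · intro x hx
      rw [abs_mul, abs_of_nonneg (by positivity : (0:ℝ) ≤ (x - r)^2/2)]
      exact mul_le_mul_of_nonneg_left
        (hcb x ⟨le_trans hap hx.1, le_trans hx.2 hqb⟩) (by positivity)
  have v1 := kernel_integral a b |f'' a| |f'' b| r1 a z hab
  have v2 := kernel_integral a b |f'' a| |f'' b| r2 z b hab
  have hb1 := (bnd r1 a z le_rfl haz hzb hint1).trans (le_of_eq v1)
  have hb2 := (bnd r2 z b haz hzb le_rfl hint2).trans (le_of_eq v2)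
  rw [key, abs_mul, abs_of_nonneg (le_of_lt (one_div_pos.2 hL))]
  refine le_trans (mul_le_mul_of_nonneg_left
    ((abs_add_le _ _).trans (add_le_add hb1 hb2)) (le_of_lt (one_div_pos.2 hL))) (le_of_eq ?_)
  simp only [hz, hr1, hr2]
  field_simp
  ring
end

section
/- Let a < b be real numbers and let f : ℝ → ℝ be twice differentiable on an open interval containing [a,b] with f'' Lebesgue integrable on [a,b]. If the function x ↦ |f''(x)| is convex on [a,b], then |(1/(b−a))·∫_a^b f(x) dx − f((a+b)/2)| ≤ ((b−a)²/48)·(|f''(a)| + |f''(b)|). -/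
open intervalIntegral MeasureTheory Set

private lemma integral_sub_pow (a c m : ℝ) (n : ℕ) :
    ∫ x in a..m, (x - c) ^ n = ((m - c) ^ (n + 1) - (a - c) ^ (n + 1)) / (n + 1) := by
  rw [show (∫ x in a..m, (x - c) ^ n) = ∫ x in a..m, (fun y => y ^ n) (x - c) from rfl,
    intervalIntegral.integral_comp_sub_right (fun y => y ^ n) c, integral_pow]

/-- Midpoint inequality: if |f''| is convex on [a,b] then
|(1/(b−a))∫_a^b f − f((a+b)/2)| ≤ ((b−a)²/48)(|f''(a)|+|f''(b)|). -/
theorem stmt_2 (f f' f'' : ℝ → ℝ) (a b u v : ℝ) (hab : a < b)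
(hua : u < a) (hbv : b < v)
    (hf' : ∀ x ∈ Set.Ioo u v, HasDerivAt f (f' x) x)
    (hf'' : ∀ x ∈ Set.Ioo u v, HasDerivAt f' (f'' x) x)
    (hint : IntervalIntegrable f'' MeasureTheory.volume a b)
    (hconv : ConvexOn ℝ (Set.Icc a b) (fun x => |f'' x|)) :
    |(1 / (b - a)) * (∫ x in a..b, f x) - f ((a + b) / 2)|
      ≤ ((b - a) ^ 2 / 48) * (|f'' a| + |f'' b|) := by
  have hsub : Set.Icc a b ⊆ Set.Ioo u v := fun x hx =>
    ⟨lt_of_lt_of_le hua hx.1, lt_of_le_of_lt hx.2 hbv⟩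
  have hne : b - a ≠ 0 := by linarith
  set A := |f'' a| with hA
  set B := |f'' b| with hB
  set m := (a + b) / 2 with hmdef
  have ham : a ≤ m := by simp only [hmdef]; linarith
  have hmb : m ≤ b := by simp only [hmdef]; linarith
  have hab' : a ≤ b := hab.le
  have hIam : Set.uIcc a m ⊆ Set.Icc a b := by
    rw [Set.uIcc_of_le ham]; exact Set.Icc_subset_Icc le_rfl hmb
  have hImb : Set.uIcc m b ⊆ Set.Icc a b := by
    rw [Set.uIcc_of_le hmb]; exact Set.Icc_subset_Icc ham le_rfl
  have hIab : Set.uIcc a b = Set.Icc a b := Set.uIcc_of_le hab'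
  have hfc : ContinuousOn f (Set.Icc a b) := fun x hx =>
    ((hf' x (hsub hx)).continuousAt).continuousWithinAt
  have hf'c : ContinuousOn f' (Set.Icc a b) := fun x hx =>
    ((hf'' x (hsub hx)).continuousAt).continuousWithinAt
  have hint_am : IntervalIntegrable f'' volume a m := hint.mono_set (by rw [hIab]; exact hIam)
  have hint_mb : IntervalIntegrable f'' volume m b := hint.mono_set (by rw [hIab]; exact hImb)
  have hf'int_am : IntervalIntegrable f' volume a m := (hf'c.mono hIam).intervalIntegrable
  have hf'int_mb : IntervalIntegrable f' volume m b := (hf'c.mono hImb).intervalIntegrable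
  have hfint_am : IntervalIntegrable f volume a m := (hfc.mono hIam).intervalIntegrable
  have hfint_mb : IntervalIntegrable f volume m b := (hfc.mono hImb).intervalIntegrable
  -- derivative facts for the polynomial kernels
  have hker : ∀ (c x : ℝ), HasDerivAt (fun y => (y - c) ^ 2 / 2) (x - c) x := by
    intro c x
    have h1 : HasDerivAt (fun y : ℝ => y - c) 1 x := (hasDerivAt_id x).sub_const c
    have := (h1.pow 2).div_const 2
    refine this.congr_deriv ?_
    push_cast; ring
  have hker' : ∀ (c x : ℝ), HasDerivAt (fun y => y - c) 1 x := fun c x =>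
    (hasDerivAt_id x).sub_const c
  -- integration by parts on [a, m]
  have ibp1 : ∫ x in a..m, (x - a) ^ 2 / 2 * f'' x
      = (m - a) ^ 2 / 2 * f' m - (a - a) ^ 2 / 2 * f' a - ∫ x in a..m, (x - a) * f' x := by
    apply intervalIntegral.integral_mul_deriv_eq_deriv_mul
    · intro x _; exact hker a x
    · intro x hx; exact hf'' x (hsub (hIam hx))
    · exact (Continuous.intervalIntegrable (by fun_prop) a m)
    · exact hint_am
  have ibp2 : ∫ x in a..m, (x - a) * f' x
      = (m - a) * f m - (a - a) * f a - ∫ x in a..m, 1 * f x := by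
    apply intervalIntegral.integral_mul_deriv_eq_deriv_mul
    · intro x _; exact hker' a x
    · intro x hx; exact hf' x (hsub (hIam hx))
    · exact (Continuous.intervalIntegrable continuous_const a m)
    · exact hf'int_am
  -- integration by parts on [m, b]
  have ibp3 : ∫ x in m..b, (x - b) ^ 2 / 2 * f'' x
      = (b - b) ^ 2 / 2 * f' b - (m - b) ^ 2 / 2 * f' m - ∫ x in m..b, (x - b) * f' x := by
    apply intervalIntegral.integral_mul_deriv_eq_deriv_mul
    · intro x _; exact hker b x
    · intro x hx; exact hf'' x (hsub (hImb hx))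
    · exact (Continuous.intervalIntegrable (by fun_prop) m b)
    · exact hint_mb
  have ibp4 : ∫ x in m..b, (x - b) * f' x
      = (b - b) * f b - (m - b) * f m - ∫ x in m..b, 1 * f x := by
    apply intervalIntegral.integral_mul_deriv_eq_deriv_mul
    · intro x _; exact hker' b x
    · intro x hx; exact hf' x (hsub (hImb hx))
    · exact (Continuous.intervalIntegrable continuous_const m b)
    · exact hf'int_mb
  have hone1 : (∫ x in a..m, 1 * f x) = ∫ x in a..m, f x := by
    simp
  have hone2 : (∫ x in m..b, 1 * f x) = ∫ x in m..b, f x := by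
    simp
  have hsplit : (∫ x in a..b, f x) = (∫ x in a..m, f x) + ∫ x in m..b, f x :=
    (integral_add_adjacent_intervals hfint_am hfint_mb).symm
  have hmam : m - a = (b - a) / 2 := by rw [hmdef]; ring
  have hmbm : m - b = -((b - a) / 2) := by rw [hmdef]; ring
  -- the key identity
  have key : (∫ x in a..b, f x) - (b - a) * f m
      = (∫ x in a..m, (x - a) ^ 2 / 2 * f'' x) + ∫ x in m..b, (x - b) ^ 2 / 2 * f'' x := by
    rw [ibp1, ibp2, ibp3, ibp4, hone1, hone2, hsplit, hmam, hmbm]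
    ring
  -- pointwise convexity bound on |f''|
  have hAB : ∀ x ∈ Set.Icc a b, |f'' x| ≤ ((b - x) * A + (x - a) * B) / (b - a) := by
    intro x hx
    have ht0 : (0:ℝ) ≤ (b - x) / (b - a) := by
      apply div_nonneg <;> linarith [hx.2]
    have ht1 : (0:ℝ) ≤ (x - a) / (b - a) := by
      apply div_nonneg <;> linarith [hx.1]
    have hts : (b - x) / (b - a) + (x - a) / (b - a) = 1 := by
      field_simp
      ring
    have := hconv.2 (Set.left_mem_Icc.2 hab') (Set.right_mem_Icc.2 hab') ht0 ht1 hts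
    simp only [smul_eq_mul] at this
    have hx' : (b - x) / (b - a) * a + (x - a) / (b - a) * b = x := by
      field_simp; ring
    rw [hx'] at this
    calc |f'' x| ≤ (b - x) / (b - a) * A + (x - a) / (b - a) * B := this
      _ = ((b - x) * A + (x - a) * B) / (b - a) := by ring
  have hA0 : (0:ℝ) ≤ A := abs_nonneg _
  have hB0 : (0:ℝ) ≤ B := abs_nonneg _
  -- bound the first integral
  have bnd1 : |∫ x in a..m, (x - a) ^ 2 / 2 * f'' x|
      ≤ ∫ x in a..m, (x - a) ^ 2 / 2 * (((b - x) * A + (x - a) * B) / (b - a)) := by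
    calc |∫ x in a..m, (x - a) ^ 2 / 2 * f'' x|
        ≤ ∫ x in a..m, |(x - a) ^ 2 / 2 * f'' x| :=
          intervalIntegral.abs_integral_le_integral_abs ham
      _ = ∫ x in a..m, (x - a) ^ 2 / 2 * |f'' x| := by
          apply intervalIntegral.integral_congr
          intro x _
          dsimp only
          rw [abs_mul, abs_of_nonneg (by positivity : (0:ℝ) ≤ (x - a) ^ 2 / 2)]
      _ ≤ ∫ x in a..m, (x - a) ^ 2 / 2 * (((b - x) * A + (x - a) * B) / (b - a)) := by
          apply intervalIntegral.integral_mono_on ham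
          · exact hint_am.abs.continuousOn_mul (g := fun x => (x - a) ^ 2 / 2) (Continuous.continuousOn (by fun_prop))
          · exact Continuous.intervalIntegrable (by fun_prop) a m
          · intro x hx
            exact mul_le_mul_of_nonneg_left
              (hAB x ⟨hx.1, le_trans hx.2 hmb⟩) (by positivity)
  have bnd2 : |∫ x in m..b, (x - b) ^ 2 / 2 * f'' x|
      ≤ ∫ x in m..b, (x - b) ^ 2 / 2 * (((b - x) * A + (x - a) * B) / (b - a)) := by
    calc |∫ x in m..b, (x - b) ^ 2 / 2 * f'' x|
        ≤ ∫ x in m..b, |(x - b) ^ 2 / 2 * f'' x| :=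
          intervalIntegral.abs_integral_le_integral_abs hmb
      _ = ∫ x in m..b, (x - b) ^ 2 / 2 * |f'' x| := by
          apply intervalIntegral.integral_congr
          intro x _
          dsimp only
          rw [abs_mul, abs_of_nonneg (by positivity : (0:ℝ) ≤ (x - b) ^ 2 / 2)]
      _ ≤ ∫ x in m..b, (x - b) ^ 2 / 2 * (((b - x) * A + (x - a) * B) / (b - a)) := by
          apply intervalIntegral.integral_mono_on hmb
          · exact hint_mb.abs.continuousOn_mul (g := fun x => (x - b) ^ 2 / 2) (Continuous.continuousOn (by fun_prop))
          · exact Continuous.intervalIntegrable (by fun_prop) m b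
          · intro x hx
            exact mul_le_mul_of_nonneg_left
              (hAB x ⟨le_trans ham hx.1, hx.2⟩) (by positivity)
  -- exact values of the majorizing integrals
  have c1 : ∫ x in a..m, (x - a) ^ 2 / 2 * (((b - x) * A + (x - a) * B) / (b - a))
      = (b - a) ^ 3 * (5 * A + 3 * B) / 384 := by
    have expand : ∀ x ∈ Set.uIcc a m, (x - a) ^ 2 / 2 * (((b - x) * A + (x - a) * B) / (b - a))
        = (A / 2) * (x - a) ^ 2 + ((B - A) / (2 * (b - a))) * (x - a) ^ 3 := by
      intro x _; field_simp; ring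
    rw [intervalIntegral.integral_congr expand, intervalIntegral.integral_add,
      intervalIntegral.integral_const_mul, intervalIntegral.integral_const_mul,
      integral_sub_pow, integral_sub_pow, hmam]
    · push_cast; field_simp; ring
    · exact Continuous.intervalIntegrable (by fun_prop) a m
    · exact Continuous.intervalIntegrable (by fun_prop) a m
  have c2 : ∫ x in m..b, (x - b) ^ 2 / 2 * (((b - x) * A + (x - a) * B) / (b - a))
      = (b - a) ^ 3 * (3 * A + 5 * B) / 384 := by
    have expand : ∀ x ∈ Set.uIcc m b, (x - b) ^ 2 / 2 * (((b - x) * A + (x - a) * B) / (b - a))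
        = (B / 2) * (x - b) ^ 2 + ((B - A) / (2 * (b - a))) * (x - b) ^ 3 := by
      intro x _; field_simp; ring
    rw [intervalIntegral.integral_congr expand, intervalIntegral.integral_add,
      intervalIntegral.integral_const_mul, intervalIntegral.integral_const_mul,
      integral_sub_pow, integral_sub_pow, hmbm]
    · push_cast; field_simp; ring
    · exact Continuous.intervalIntegrable (by fun_prop) m b
    · exact Continuous.intervalIntegrable (by fun_prop) m b
  -- put everything together
  have main : |(∫ x in a..b, f x) - (b - a) * f m| ≤ (b - a) ^ 3 * (A + B) / 48 := by
    rw [key]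
    calc |(∫ x in a..m, (x - a) ^ 2 / 2 * f'' x) + ∫ x in m..b, (x - b) ^ 2 / 2 * f'' x|
        ≤ |∫ x in a..m, (x - a) ^ 2 / 2 * f'' x| + |∫ x in m..b, (x - b) ^ 2 / 2 * f'' x| :=
          abs_add_le _ _
      _ ≤ (b - a) ^ 3 * (5 * A + 3 * B) / 384 + (b - a) ^ 3 * (3 * A + 5 * B) / 384 := by
          rw [← c1, ← c2]; exact add_le_add bnd1 bnd2
      _ = (b - a) ^ 3 * (A + B) / 48 := by ring
  have hrw : (1 / (b - a)) * (∫ x in a..b, f x) - f m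
      = (1 / (b - a)) * ((∫ x in a..b, f x) - (b - a) * f m) := by
    field_simp
  rw [hrw, abs_mul, abs_of_nonneg (div_nonneg zero_le_one (by linarith : (0:ℝ) ≤ b - a))]
  calc (1 / (b - a)) * |(∫ x in a..b, f x) - (b - a) * f m|
      ≤ (1 / (b - a)) * ((b - a) ^ 3 * (A + B) / 48) :=
        mul_le_mul_of_nonneg_left main (div_nonneg zero_le_one (by linarith : (0:ℝ) ≤ b - a))
    _ = (b - a) ^ 2 / 48 * (A + B) := by field_simp
end

section
/- Let a < b be real numbers and let f : ℝ → ℝ be twice differentiable on an open interval containing [a,b] with f'' Lebesgue integrable on [a,b]. If the function x ↦ |f''(x)| is convex on [a,b] and f'(a) = f'(b), then |(1/(b−a))·∫_a^b f(x) dx − (f(a)+f(b))/2| ≤ ((b−a)²/48)·(|f''(a)| + |f''(b)|). -/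
open MeasureTheory Set intervalIntegral

/-- Trapezoid inequality: if |f''| is convex on [a,b] and f'(a) = f'(b), then
|(1/(b−a))∫_a^b f − (f(a)+f(b))/2| ≤ ((b−a)²/48)(|f''(a)|+|f''(b)|). -/
theorem stmt_3 (f f' f'' : ℝ → ℝ) (a b u v : ℝ) (hab : a < b)
(hua : u < a) (hbv : b < v)
    (hf' : ∀ x ∈ Set.Ioo u v, HasDerivAt f (f' x) x)
    (hf'' : ∀ x ∈ Set.Ioo u v, HasDerivAt f' (f'' x) x)
    (hint : IntervalIntegrable f'' MeasureTheory.volume a b)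
    (hconv : ConvexOn ℝ (Set.Icc a b) (fun x => |f'' x|))
    (hder : f' a = f' b) :
    |(1 / (b - a)) * (∫ x in a..b, f x) - (f a + f b) / 2|
      ≤ ((b - a) ^ 2 / 48) * (|f'' a| + |f'' b|) := by
  have hab' : (0:ℝ) < b - a := by linarith
  have hle : a ≤ b := hab.le
  have huIcc : Set.uIcc a b = Set.Icc a b := Set.uIcc_of_le hle
  have hsub : Set.Icc a b ⊆ Set.Ioo u v := fun x hx =>
    ⟨lt_of_lt_of_le hua hx.1, lt_of_le_of_lt hx.2 hbv⟩
  have hopen : IsOpen (Set.Ioo u v) := isOpen_Ioo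
  set m : ℝ := (a + b) / 2 with hmdef
  set A : ℝ := |f'' a| with hA
  set B : ℝ := |f'' b| with hB
  -- continuity of f on Ioo u v
  have hfc : ContinuousOn f (Set.Ioo u v) := fun x hx =>
    ((hf' x hx).continuousAt).continuousWithinAt
  -- kernel function g
  set g : ℝ → ℝ := fun x => (x - m) ^ 2 / 2 * f'' x with hg
  have hker : ContinuousOn (fun x : ℝ => (x - m) ^ 2 / 2) (Set.uIcc a b) := by fun_prop
  have hgint : IntervalIntegrable g volume a b := hint.continuousOn_mul hker
  -- FTC for the antiderivative of f
  have hF : ∀ x ∈ Set.Icc a b, HasDerivAt (fun y => ∫ t in a..y, f t) (f x) x := by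
    intro x hx
    have hxuv := hsub hx
    have hcont : ContinuousAt f x := (hf' x hxuv).continuousAt
    have hfi : IntervalIntegrable f volume a x := by
      apply ContinuousOn.intervalIntegrable
      intro y hy
      refine ((hf' y ?_).continuousAt).continuousWithinAt
      have : Set.uIcc a x ⊆ Set.Icc a b := by
        rw [Set.uIcc_of_le hx.1]
        exact Set.Icc_subset_Icc le_rfl hx.2
      exact hsub (this hy)
    exact intervalIntegral.integral_hasDerivAt_right hfi
      (hfc.stronglyMeasurableAtFilter hopen x hxuv) hcont
  -- H and its derivative
  set H : ℝ → ℝ := fun x => (x - m) ^ 2 / 2 * f' x - (x - m) * f x + ∫ t in a..x, f t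
    with hHdef
  have hH : ∀ x ∈ Set.uIcc a b, HasDerivAt H (g x) x := by
    intro x hx
    rw [huIcc] at hx
    have hxuv := hsub hx
    have h1 : HasDerivAt (fun y : ℝ => (y - m) ^ 2 / 2 * f' y)
        (((2 : ℕ) * (x - m) ^ 1 * 1) / 2 * f' x + (x - m) ^ 2 / 2 * f'' x) x :=
      ((((hasDerivAt_id x).sub_const m).pow 2).div_const 2).mul (hf'' x hxuv)
    have h2 : HasDerivAt (fun y : ℝ => (y - m) * f y)
        (1 * f x + (x - m) * f' x) x :=
      ((hasDerivAt_id x).sub_const m).mul (hf' x hxuv)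
    have h3 := hF x hx
    have := (h1.sub h2).add h3
    refine this.congr_deriv ?_
    show _ = (x - m) ^ 2 / 2 * f'' x
    push_cast
    ring
  -- key identity
  have key : ∫ x in a..b, g x = (∫ x in a..b, f x) - (b - a) * (f a + f b) / 2 := by
    rw [intervalIntegral.integral_eq_sub_of_hasDerivAt hH hgint]
    simp only [hHdef, intervalIntegral.integral_same]
    rw [hder, hmdef]
    ring
  -- convexity bound
  have hconvb : ∀ x ∈ Set.Icc a b, |f'' x| ≤ ((b - x) * A + (x - a) * B) / (b - a) := by
    intro x hx
    have ht0 : (0:ℝ) ≤ (b - x) / (b - a) := by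
      apply div_nonneg _ hab'.le; linarith [hx.2]
    have ht1 : (0:ℝ) ≤ (x - a) / (b - a) := by
      apply div_nonneg _ hab'.le; linarith [hx.1]
    have hts : (b - x) / (b - a) + (x - a) / (b - a) = 1 := by
      field_simp
      ring
    have := hconv.2 (Set.left_mem_Icc.2 hle) (Set.right_mem_Icc.2 hle) ht0 ht1 hts
    simp only [smul_eq_mul] at this
    have hxeq : (b - x) / (b - a) * a + (x - a) / (b - a) * b = x := by
      field_simp
      ring
    rw [hxeq] at this
    calc |f'' x| ≤ (b - x) / (b - a) * A + (x - a) / (b - a) * B := this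
      _ = ((b - x) * A + (x - a) * B) / (b - a) := by ring
  -- the majorant φ
  set φ : ℝ → ℝ := fun x => (x - m) ^ 2 / 2 * (((b - x) * A + (x - a) * B) / (b - a))
    with hφdef
  have hφcont : ContinuousOn φ (Set.uIcc a b) := by fun_prop
  have hφint : IntervalIntegrable φ volume a b := hφcont.intervalIntegrable
  have hptwise : ∀ x ∈ Set.Icc a b, |g x| ≤ φ x := by
    intro x hx
    have h1 : |g x| = (x - m) ^ 2 / 2 * |f'' x| := by
      rw [hg, abs_mul, abs_of_nonneg (by positivity : (0:ℝ) ≤ (x - m) ^ 2 / 2)]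
    rw [h1, hφdef]
    exact mul_le_mul_of_nonneg_left (hconvb x hx) (by positivity)
  have hmono : |∫ x in a..b, g x| ≤ ∫ x in a..b, φ x := by
    calc |∫ x in a..b, g x| ≤ ∫ x in a..b, |g x| :=
          intervalIntegral.abs_integral_le_integral_abs hle
      _ ≤ ∫ x in a..b, φ x :=
          intervalIntegral.integral_mono_on hle hgint.abs hφint hptwise
  -- compute ∫ φ
  have hφval : ∫ x in a..b, φ x = (b - a) ^ 3 / 48 * (A + B) := by
    set Φ : ℝ → ℝ := fun x => (A / 2 * (-(x - m) ^ 4 / 4 + (b - m) * (x - m) ^ 3 / 3)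
      + B / 2 * ((x - m) ^ 4 / 4 - (a - m) * (x - m) ^ 3 / 3)) / (b - a) with hΦdef
    have hΦ : ∀ x ∈ Set.uIcc a b, HasDerivAt Φ (φ x) x := by
      intro x hx
      have hd : HasDerivAt Φ
          ((A / 2 * (-(((4:ℕ) * (x - m) ^ 3 * 1)) / 4 + (b - m) * (((3:ℕ) * (x - m) ^ 2 * 1)) / 3)
            + B / 2 * ((((4:ℕ) * (x - m) ^ 3 * 1)) / 4 - (a - m) * (((3:ℕ) * (x - m) ^ 2 * 1)) / 3))
            / (b - a)) x := by
        have hp4 : HasDerivAt (fun y : ℝ => (y - m) ^ 4) (((4:ℕ) * (x - m) ^ 3 * 1)) x :=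
          ((hasDerivAt_id x).sub_const m).pow 4
        have hp3 : HasDerivAt (fun y : ℝ => (y - m) ^ 3) (((3:ℕ) * (x - m) ^ 2 * 1)) x :=
          ((hasDerivAt_id x).sub_const m).pow 3
        exact ((((hp4.neg.div_const 4).add ((hp3.const_mul (b - m)).div_const 3)).const_mul
          (A / 2)).add (((hp4.div_const 4).sub ((hp3.const_mul (a - m)).div_const 3)).const_mul
          (B / 2))).div_const (b - a)
      convert hd using 1
      rw [hφdef]
      push_cast
      field_simp
      ring
    rw [intervalIntegral.integral_eq_sub_of_hasDerivAt hΦ hφint, hΦdef, hmdef]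
    field_simp
    ring
  -- finish
  have hlhs : (1 / (b - a)) * (∫ x in a..b, f x) - (f a + f b) / 2
      = (1 / (b - a)) * ∫ x in a..b, g x := by
    rw [key]
    field_simp
  rw [hlhs, abs_mul, abs_of_pos (by positivity : (0:ℝ) < 1 / (b - a))]
  calc 1 / (b - a) * |∫ x in a..b, g x| ≤ 1 / (b - a) * ((b - a) ^ 3 / 48 * (A + B)) := by
        apply mul_le_mul_of_nonneg_left _ (by positivity)
        rw [← hφval]; exact hmono
    _ = ((b - a) ^ 2 / 48) * (A + B) := by field_simp
end

section
/- Let a < b be real numbers and let f : ℝ → ℝ be twice differentiable on an open interval containing [a,b] with f'' Lebesgue integrable on [a,b]. Let c, y, d be real numbers with 0 ≤ c ≤ y ≤ d ≤ 1 and 0 < y < 1, and let p, q > 1 satisfy 1/p + 1/q = 1. If the function x ↦ |f''(x)|^q is convex on [a,b], then |E(f;a,b;c,y,d)| ≤ ((b−a)²/2)·(1/(2p+1))^(1/p) · ( (c^(2p+1) + (y−c)^(2p+1))^(1/p) · ((y²·|f''(a)|^q + (2y−y²)·|f''(b)|^q)/2)^(1/q) + ((d−y)^(2p+1) + (1−d)^(2p+1))^(1/p)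 · (((1−y²)·|f''(a)|^q + (1−y)²·|f''(b)|^q)/2)^(1/q) ). -/
open MeasureTheory intervalIntegral Set Filter

lemma lin_integral (α β A B : ℝ) :
    ∫ t in α..β, (t * A + (1 - t) * B) =
      ((β ^ 2 - α ^ 2) * A + (2 * (β - α) - (β ^ 2 - α ^ 2)) * B) / 2 := by
  have h1 : IntervalIntegrable (fun t : ℝ => t * A) volume α β :=
    (continuous_id.mul continuous_const).intervalIntegrable _ _
  have h2 : IntervalIntegrable (fun t : ℝ => (1 - t) * B) volume α β :=
    (((continuous_const.sub continuous_id).mul continuous_const)).intervalIntegrable _ _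
  rw [intervalIntegral.integral_add h1 h2, intervalIntegral.integral_mul_const,
    intervalIntegral.integral_mul_const, integral_id, intervalIntegral.integral_sub
      (intervalIntegrable_const) (intervalIntegrable_id), integral_id,
    intervalIntegral.integral_const]
  simp only [smul_eq_mul]
  ring

lemma abs_rpow_cont {δ r : ℝ} (hr : 0 ≤ r) : Continuous fun t : ℝ => |t - δ| ^ r :=
  (Real.continuous_rpow_const hr).comp ((continuous_id.sub continuous_const).abs)

lemma abs_rpow_integral {α δ β r : ℝ} (h1 : α ≤ δ) (h2 : δ ≤ β) (hr : 0 < r) :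
    ∫ t in α..β, |t - δ| ^ r = ((δ - α) ^ (r + 1) + (β - δ) ^ (r + 1)) / (r + 1) := by
  have hcont := abs_rpow_cont (δ := δ) hr.le
  have hsplit : (∫ t in α..δ, |t - δ| ^ r) + (∫ t in δ..β, |t - δ| ^ r)
      = ∫ t in α..β, |t - δ| ^ r :=
    intervalIntegral.integral_add_adjacent_intervals (hcont.intervalIntegrable _ _)
      (hcont.intervalIntegrable _ _)
  have e1 : (∫ t in α..δ, |t - δ| ^ r) = (δ - α) ^ (r + 1) / (r + 1) := by
    have : (∫ t in α..δ, |t - δ| ^ r) = ∫ t in α..δ, (δ - t) ^ r := by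
      apply intervalIntegral.integral_congr
      intro t ht
      rw [Set.uIcc_of_le h1] at ht
      show |t - δ| ^ r = (δ - t) ^ r
      rw [abs_of_nonpos (by linarith [ht.2]), neg_sub]
    rw [this]
    rw [intervalIntegral.integral_comp_sub_left (fun x => x ^ r) δ]
    rw [integral_rpow (Or.inl (by linarith)), sub_self, Real.zero_rpow (by linarith)]
    ring
  have e2 : (∫ t in δ..β, |t - δ| ^ r) = (β - δ) ^ (r + 1) / (r + 1) := by
    have : (∫ t in δ..β, |t - δ| ^ r) = ∫ t in δ..β, (t - δ) ^ r := by
      apply intervalIntegral.integral_congr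
      intro t ht
      rw [Set.uIcc_of_le h2] at ht
      show |t - δ| ^ r = (t - δ) ^ r
      rw [abs_of_nonneg (by linarith [ht.1])]
    rw [this, intervalIntegral.integral_comp_sub_right (fun x => x ^ r) δ]
    rw [integral_rpow (Or.inl (by linarith)), sub_self, Real.zero_rpow (by linarith)]
    ring
  rw [← hsplit, e1, e2]; ring

lemma two_rpow_abs (x : ℝ) : |x| ^ (2:ℝ) = x ^ 2 := by
  rw [show (2:ℝ) = ((2:ℕ):ℝ) by norm_num, Real.rpow_natCast, sq_abs]

lemma holder_piece {w : ℝ → ℝ} {α β δ p q M : ℝ} (hαβ : α ≤ β)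
    (hpq : Real.HolderConjugate p q)
    (hw : AEStronglyMeasurable w (volume.restrict (Set.Ioc α β)))
    (hwM : ∀ t ∈ Set.Ioc α β, |w t| ≤ M) :
    |∫ t in α..β, (t - δ) ^ 2 * w t| ≤
      (∫ t in α..β, |t - δ| ^ (2 * p)) ^ (1 / p) * (∫ t in α..β, |w t| ^ q) ^ (1 / q) := by
  haveI : IsFiniteMeasure (volume.restrict (Set.Ioc α β)) :=
    ⟨by rw [Measure.restrict_apply_univ, Real.volume_Ioc]; exact ENNReal.ofReal_lt_top⟩
  set μ := volume.restrict (Set.Ioc α β)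
  have habs : |∫ t in α..β, (t - δ) ^ 2 * w t| ≤ ∫ t in α..β, |(t - δ) ^ 2 * w t| :=
    intervalIntegral.abs_integral_le_integral_abs hαβ
  have hcongr : ∀ t : ℝ, |(t - δ) ^ 2 * w t| = (|t - δ| ^ (2:ℝ)) * |w t| := by
    intro t
    rw [abs_mul, abs_of_nonneg (sq_nonneg _), two_rpow_abs]
  have hfm : MemLp (fun t => |t - δ| ^ (2:ℝ)) (ENNReal.ofReal p) μ := by
    apply MemLp.of_bound ((abs_rpow_cont (by norm_num)).aestronglyMeasurable) ((|α| + |β| + |δ|)^2)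
    filter_upwards [ae_restrict_mem measurableSet_Ioc] with t ht
    rw [Real.norm_eq_abs, two_rpow_abs, abs_of_nonneg (sq_nonneg _)]
    have h1 : |t - δ| ≤ |α| + |β| + |δ| := by
      have h2 : |t| ≤ max |α| |β| := abs_le_max_abs_abs ht.1.le ht.2
      have h3 : max |α| |β| ≤ |α| + |β| :=
        max_le (le_add_of_nonneg_right (abs_nonneg _)) (le_add_of_nonneg_left (abs_nonneg _))
      have h4 : |t - δ| ≤ |t| + |δ| := by
        rw [sub_eq_add_neg]
        exact (abs_add_le t (-δ)).trans_eq (by rw [abs_neg])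
      linarith
    calc (t - δ)^2 = |t - δ|^2 := (sq_abs _).symm
      _ ≤ (|α| + |β| + |δ|)^2 := by
          apply pow_le_pow_left₀ (abs_nonneg _) h1
  have hgm : MemLp (fun t => |w t|) (ENNReal.ofReal q) μ := by
    apply MemLp.of_bound hw.norm M
    filter_upwards [ae_restrict_mem measurableSet_Ioc] with t ht
    rw [Real.norm_eq_abs, Real.norm_eq_abs, abs_abs]
    exact hwM t ht
  have key := MeasureTheory.integral_mul_le_Lp_mul_Lq_of_nonneg hpq
      (f := fun t => |t - δ| ^ (2:ℝ)) (g := fun t => |w t|)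
      (Eventually.of_forall fun t => Real.rpow_nonneg (abs_nonneg _) _)
      (Eventually.of_forall fun t => abs_nonneg _) hfm hgm
  have e0 : ∫ t in α..β, |(t - δ) ^ 2 * w t| = ∫ a, (|a - δ| ^ (2:ℝ)) * |w a| ∂μ := by
    rw [intervalIntegral.integral_of_le hαβ]
    exact integral_congr_ae (Eventually.of_forall fun t => hcongr t)
  have e1 : ∫ a, (|a - δ| ^ (2:ℝ)) ^ p ∂μ = ∫ t in α..β, |t - δ| ^ (2 * p) := by
    rw [intervalIntegral.integral_of_le hαβ]
    refine integral_congr_ae (Eventually.of_forall fun t => ?_)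
    show (|t - δ| ^ (2:ℝ)) ^ p = |t - δ| ^ (2 * p)
    rw [← Real.rpow_mul (abs_nonneg _)]
  have e2 : ∫ a, |w a| ^ q ∂μ = ∫ t in α..β, |w t| ^ q := (intervalIntegral.integral_of_le hαβ).symm
  calc |∫ t in α..β, (t - δ) ^ 2 * w t| ≤ ∫ t in α..β, |(t - δ) ^ 2 * w t| := habs
    _ = ∫ a, (|a - δ| ^ (2:ℝ)) * |w a| ∂μ := e0
    _ ≤ _ := by rw [← e1, ← e2]; exact key

lemma ibp_piece {g g1 g2 : ℝ → ℝ} {s t δ : ℝ} (hst : s ≤ t)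
    (hg : ∀ x ∈ Set.Icc s t, HasDerivAt g (g1 x) x)
    (hg1 : ∀ x ∈ Set.Icc s t, HasDerivAt g1 (g2 x) x)
    (hg2i : IntervalIntegrable g2 volume s t)
    (hg1i : IntervalIntegrable g1 volume s t) :
    ∫ x in s..t, (x - δ) ^ 2 * g2 x
      = (t - δ) ^ 2 * g1 t - (s - δ) ^ 2 * g1 s - 2 * (t - δ) * g t + 2 * (s - δ) * g s
        + 2 * ∫ x in s..t, g x := by
  have hu : ∀ x ∈ Set.uIcc s t, HasDerivAt (fun x : ℝ => (x - δ) ^ 2) (2 * (x - δ)) x := by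
    intro x _
    have := ((hasDerivAt_id x).sub_const δ).pow 2
    refine this.congr_deriv ?_
    simp [mul_comm]
  have hu2 : ∀ x ∈ Set.uIcc s t, HasDerivAt (fun x : ℝ => 2 * (x - δ)) 2 x := by
    intro x _
    have := ((hasDerivAt_id x).sub_const δ).const_mul 2
    refine this.congr_deriv ?_; ring
  have huIcc : Set.uIcc s t = Set.Icc s t := Set.uIcc_of_le hst
  have h1 := intervalIntegral.integral_mul_deriv_eq_deriv_mul hu
    (fun x hx => hg1 x (huIcc ▸ hx))
    (((continuous_const.mul (continuous_id.sub continuous_const))).intervalIntegrable _ _) hg2i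
  have h2 := intervalIntegral.integral_mul_deriv_eq_deriv_mul hu2
    (fun x hx => hg x (huIcc ▸ hx))
    (continuous_const.intervalIntegrable _ _) hg1i
  rw [h1, h2, intervalIntegral.integral_const_mul]
  ring

/-- Theorem 10 of the paper: Hölder-type bound for |E(f;a,b;c,y,d)| with
|f''|^q convex, 1/p + 1/q = 1, p, q > 1. -/
theorem stmt_4 (f f' f'' : ℝ → ℝ) (a b u v c y d p q : ℝ) (hab : a < b)
(hua : u < a) (hbv : b < v)
    (hf' : ∀ x ∈ Set.Ioo u v, HasDerivAt f (f' x) x)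
    (hf'' : ∀ x ∈ Set.Ioo u v, HasDerivAt f' (f'' x) x)
    (hint : IntervalIntegrable f'' MeasureTheory.volume a b)
    (hc : 0 ≤ c) (hcy : c ≤ y) (hyd : y ≤ d) (hd : d ≤ 1)
    (hy0 : 0 < y) (hy1 : y < 1)
    (hp : 1 < p) (hq : 1 < q) (hpq : 1 / p + 1 / q = 1)
    (hconv : ConvexOn ℝ (Set.Icc a b) (fun x => |f'' x| ^ q)) :
|(((c - y) ^ 2 - (d - y) ^ 2) / 2) * (a - b) * f' (y * a + (1 - y) * b)
      + (((d - 1) ^ 2 * f' a - c ^ 2 * f' b) / 2) * (a - b)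
      + (c - d) * f (y * a + (1 - y) * b)
      + (d - 1) * f a - c * f b
      + (1 / (b - a)) * ∫ x in a..b, f x|
    ≤ ((b - a) ^ 2 / 2) * (1 / (2 * p + 1)) ^ (1 / p) *
        ((c ^ (2 * p + 1) + (y - c) ^ (2 * p + 1)) ^ (1 / p) *
            ((y ^ 2 * |f'' a| ^ q + (2 * y - y ^ 2) * |f'' b| ^ q) / 2) ^ (1 / q)
          + ((d - y) ^ (2 * p + 1) + (1 - d) ^ (2 * p + 1)) ^ (1 / p) *
            (((1 - y ^ 2) * |f'' a| ^ q + (1 - y) ^ 2 * |f'' b| ^ q) / 2) ^ (1 / q)) := by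
  have hq0 : (0:ℝ) < q := lt_trans one_pos hq
  have hp0 : (0:ℝ) < p := lt_trans one_pos hp
  have hpqc : Real.HolderConjugate p q := ⟨by simpa [one_div] using hpq, hp0, hq0⟩
  have hsub : Set.Icc a b ⊆ Set.Ioo u v := fun x hx => ⟨lt_of_lt_of_le hua hx.1, lt_of_le_of_lt hx.2 hbv⟩
  have hX : ∀ t ∈ Set.Icc (0:ℝ) 1, t * a + (1 - t) * b ∈ Set.Icc a b := by
    intro t ht
    constructor <;> nlinarith [ht.1, ht.2, hab.le]
  have hXc : Continuous (fun t : ℝ => t * a + (1 - t) * b) := by fun_prop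
  have hXd : ∀ t : ℝ, HasDerivAt (fun t : ℝ => t * a + (1 - t) * b) (a - b) t := by
    intro t
    have := ((hasDerivAt_id t).mul_const a).add
      (((hasDerivAt_const t (1:ℝ)).sub (hasDerivAt_id t)).mul_const b)
    refine this.congr_deriv ?_; ring
  have hgd : ∀ t ∈ Set.Icc (0:ℝ) 1, HasDerivAt (fun t : ℝ => f (t * a + (1 - t) * b))
      ((a - b) * f' (t * a + (1 - t) * b)) t := by
    intro t ht
    have := (hf' _ (hsub (hX t ht))).comp t (hXd t)
    refine this.congr_deriv ?_; ring
  have hg1d : ∀ t ∈ Set.Icc (0:ℝ) 1, HasDerivAt (fun t : ℝ => (a - b) * f' (t * a + (1 - t) * b))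
      ((a - b) ^ 2 * f'' (t * a + (1 - t) * b)) t := by
    intro t ht
    have := ((hf'' _ (hsub (hX t ht))).comp t (hXd t)).const_mul (a - b)
    refine this.congr_deriv ?_; ring
  have hg1c : ContinuousOn (fun t : ℝ => (a - b) * f' (t * a + (1 - t) * b)) (Set.Icc 0 1) := by
    intro t ht
    have hfc : ContinuousAt (fun t : ℝ => f' (t * a + (1 - t) * b)) t :=
      ContinuousAt.comp (g := f') (f := fun t : ℝ => t * a + (1 - t) * b)
        (hf'' _ (hsub (hX t ht))).continuousAt hXc.continuousAt
    exact (continuousAt_const.mul hfc).continuousWithinAt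
  have hgc : ContinuousOn (fun t : ℝ => f (t * a + (1 - t) * b)) (Set.Icc 0 1) := by
    intro t ht
    exact (ContinuousAt.comp (g := f) (f := fun t : ℝ => t * a + (1 - t) * b)
      (hf' _ (hsub (hX t ht))).continuousAt hXc.continuousAt).continuousWithinAt
  -- measurability of t ↦ f'' (X t)
  have hmeas : ∀ s r : ℝ, 0 ≤ s → r ≤ 1 →
      AEStronglyMeasurable (fun t => f'' (t * a + (1 - t) * b)) (volume.restrict (Set.Ioc s r)) := by
    intro s r hs hr
    have hm : AEStronglyMeasurable (fun t => deriv f' (t * a + (1 - t) * b))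
        (volume.restrict (Set.Ioc s r)) :=
      ((measurable_deriv f').comp hXc.measurable).aestronglyMeasurable
    apply hm.congr
    filter_upwards [ae_restrict_mem measurableSet_Ioc] with t ht
    exact ((hf'' _ (hsub (hX t ⟨le_trans hs ht.1.le, le_trans ht.2 hr⟩))).deriv)
  -- convexity bound
  have hB : ∀ t ∈ Set.Icc (0:ℝ) 1, |f'' (t * a + (1 - t) * b)| ^ q
      ≤ t * |f'' a| ^ q + (1 - t) * |f'' b| ^ q := by
    intro t ht
    have := hconv.2 (Set.left_mem_Icc.mpr hab.le) (Set.right_mem_Icc.mpr hab.le)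
      ht.1 (sub_nonneg.mpr ht.2) (by ring)
    simpa [smul_eq_mul] using this
  set M0 : ℝ := max (|f'' a| ^ q) (|f'' b| ^ q) with hM0
  have hM0nn : 0 ≤ M0 := le_trans (Real.rpow_nonneg (abs_nonneg _) _) (le_max_left _ _)
  have hBmax : ∀ t ∈ Set.Icc (0:ℝ) 1, |f'' (t * a + (1 - t) * b)| ^ q ≤ M0 := by
    intro t ht
    refine (hB t ht).trans ?_
    have h1 : t * |f'' a| ^ q ≤ t * M0 :=
      mul_le_mul_of_nonneg_left (le_max_left _ _) ht.1
    have h2 : (1 - t) * |f'' b| ^ q ≤ (1 - t) * M0 :=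
      mul_le_mul_of_nonneg_left (le_max_right _ _) (by linarith [ht.2])
    nlinarith
  have hM : ∀ t ∈ Set.Icc (0:ℝ) 1, |f'' (t * a + (1 - t) * b)| ≤ M0 ^ (1 / q) := by
    intro t ht
    calc |f'' (t * a + (1 - t) * b)| = (|f'' (t * a + (1 - t) * b)| ^ q) ^ (1 / q) := by
          rw [one_div, Real.rpow_rpow_inv (abs_nonneg _) hq0.ne']
      _ ≤ M0 ^ (1 / q) :=
          Real.rpow_le_rpow (Real.rpow_nonneg (abs_nonneg _) _) (hBmax t ht) (by positivity)
  -- integrability of h on subintervals of [0,1]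
  have hInth : ∀ s r : ℝ, 0 ≤ s → r ≤ 1 → s ≤ r →
      IntervalIntegrable (fun t => f'' (t * a + (1 - t) * b)) volume s r := by
    intro s r hs hr hsr
    rw [intervalIntegrable_iff_integrableOn_Ioc_of_le hsr]
    apply Integrable.mono' (integrable_const (M0 ^ (1 / q))) (hmeas s r hs hr)
    filter_upwards [ae_restrict_mem measurableSet_Ioc] with t ht
    rw [Real.norm_eq_abs]
    exact hM t ⟨le_trans hs ht.1.le, le_trans ht.2 hr⟩
  have hInthq : ∀ s r : ℝ, 0 ≤ s → r ≤ 1 → s ≤ r →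
      IntervalIntegrable (fun t => |f'' (t * a + (1 - t) * b)| ^ q) volume s r := by
    intro s r hs hr hsr
    rw [intervalIntegrable_iff_integrableOn_Ioc_of_le hsr]
    apply Integrable.mono' (integrable_const M0)
      (((hmeas s r hs hr).norm.aemeasurable.pow aemeasurable_const).aestronglyMeasurable)
    filter_upwards [ae_restrict_mem measurableSet_Ioc] with t ht
    rw [Real.norm_eq_abs, abs_of_nonneg (Real.rpow_nonneg (norm_nonneg _) _)]
    exact hBmax t ⟨le_trans hs ht.1.le, le_trans ht.2 hr⟩
  -- IBP identities
  have hsub01 : ∀ {s r : ℝ}, 0 ≤ s → r ≤ 1 → s ≤ r → Set.uIcc s r ⊆ Set.Icc (0:ℝ) 1 := by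
    intro s r hs hr hsr
    rw [Set.uIcc_of_le hsr]
    exact Set.Icc_subset_Icc hs hr
  have ibp1 := ibp_piece (g := fun t : ℝ => f (t*a+(1-t)*b))
      (g1 := fun t : ℝ => (a-b) * f' (t*a+(1-t)*b))
      (g2 := fun t : ℝ => (a-b)^2 * f'' (t*a+(1-t)*b)) (s := 0) (t := y) (δ := c) hy0.le
      (fun x hx => hgd x (Set.Icc_subset_Icc le_rfl hy1.le hx))
      (fun x hx => hg1d x (Set.Icc_subset_Icc le_rfl hy1.le hx))
      ((hInth 0 y le_rfl hy1.le hy0.le).const_mul _)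
      ((hg1c.mono (hsub01 le_rfl hy1.le hy0.le)).intervalIntegrable)
  have ibp2 := ibp_piece (g := fun t : ℝ => f (t*a+(1-t)*b))
      (g1 := fun t : ℝ => (a-b) * f' (t*a+(1-t)*b))
      (g2 := fun t : ℝ => (a-b)^2 * f'' (t*a+(1-t)*b)) (s := y) (t := 1) (δ := d) hy1.le
      (fun x hx => hgd x (Set.Icc_subset_Icc hy0.le le_rfl hx))
      (fun x hx => hg1d x (Set.Icc_subset_Icc hy0.le le_rfl hx))
      ((hInth y 1 hy0.le le_rfl hy1.le).const_mul _)
      ((hg1c.mono (hsub01 hy0.le le_rfl hy1.le)).intervalIntegrable)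
  rw [show (0:ℝ)*a+(1-0)*b = b by norm_num] at ibp1
  rw [show (1:ℝ)*a+(1-1)*b = a by norm_num] at ibp2
  have hIsplit : (∫ t in (0:ℝ)..y, f (t*a+(1-t)*b)) + ∫ t in y..(1:ℝ), f (t*a+(1-t)*b)
      = ∫ t in (0:ℝ)..(1:ℝ), f (t*a+(1-t)*b) :=
    intervalIntegral.integral_add_adjacent_intervals
      ((hgc.mono (hsub01 le_rfl hy1.le hy0.le)).intervalIntegrable)
      ((hgc.mono (hsub01 hy0.le le_rfl hy1.le)).intervalIntegrable)
  have hInt01 : (∫ t in (0:ℝ)..(1:ℝ), f (t*a+(1-t)*b)) = (1/(b-a)) * ∫ x in a..b, f x := by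
    have h1 : (∫ t in (0:ℝ)..(1:ℝ), f (t*a+(1-t)*b)) = ∫ t in (0:ℝ)..(1:ℝ), f ((a-b)*t + b) := by
      apply intervalIntegral.integral_congr
      intro t _
      show f (t*a+(1-t)*b) = f ((a-b)*t + b)
      congr 1; ring
    rw [h1, intervalIntegral.integral_comp_mul_add f (sub_ne_zero.mpr hab.ne) b]
    rw [show (a-b)*0 + b = b by ring, show (a-b)*1 + b = a by ring,
      intervalIntegral.integral_symm a b, smul_eq_mul]
    field_simp
    rw [show a - b = -(b-a) by ring, div_neg, neg_neg]
  have key : (((c - y) ^ 2 - (d - y) ^ 2) / 2) * (a - b) * f' (y * a + (1 - y) * b)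
      + (((d - 1) ^ 2 * f' a - c ^ 2 * f' b) / 2) * (a - b)
      + (c - d) * f (y * a + (1 - y) * b)
      + (d - 1) * f a - c * f b
      + (1 / (b - a)) * ∫ x in a..b, f x
      = (1/2) * ((∫ t in (0:ℝ)..y, (t - c)^2 * ((a-b)^2 * f'' (t*a+(1-t)*b)))
          + ∫ t in y..(1:ℝ), (t - d)^2 * ((a-b)^2 * f'' (t*a+(1-t)*b))) := by
    rw [ibp1, ibp2, ← hInt01, ← hIsplit]
    ring
  have hfac1 : (∫ t in (0:ℝ)..y, (t - c)^2 * ((a-b)^2 * f'' (t*a+(1-t)*b)))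
      = (a-b)^2 * ∫ t in (0:ℝ)..y, (t - c)^2 * f'' (t*a+(1-t)*b) := by
    rw [← intervalIntegral.integral_const_mul]
    exact intervalIntegral.integral_congr fun t _ => by ring
  have hfac2 : (∫ t in y..(1:ℝ), (t - d)^2 * ((a-b)^2 * f'' (t*a+(1-t)*b)))
      = (a-b)^2 * ∫ t in y..(1:ℝ), (t - d)^2 * f'' (t*a+(1-t)*b) := by
    rw [← intervalIntegral.integral_const_mul]
    exact intervalIntegral.integral_congr fun t _ => by ring
  -- Hölder bounds
  have hQ1 := holder_piece (w := fun t => f'' (t*a+(1-t)*b)) (α := 0) (β := y) (δ := c)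
    (M := M0 ^ (1/q)) hy0.le hpqc (hmeas 0 y le_rfl hy1.le)
    (fun t ht => hM t ⟨ht.1.le, le_trans ht.2 hy1.le⟩)
  have hQ2 := holder_piece (w := fun t => f'' (t*a+(1-t)*b)) (α := y) (β := 1) (δ := d)
    (M := M0 ^ (1/q)) hy1.le hpqc (hmeas y 1 hy0.le le_rfl)
    (fun t ht => hM t ⟨le_trans hy0.le ht.1.le, ht.2⟩)
  have h2p : (0:ℝ) < 2 * p := by linarith
  have hD1 : (∫ t in (0:ℝ)..y, |t - c| ^ (2*p)) = (c ^ (2*p+1) + (y-c) ^ (2*p+1)) / (2*p+1) := by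
    have := abs_rpow_integral (α := 0) (δ := c) (β := y) hc hcy h2p
    rw [sub_zero] at this
    exact this
  have hD2 : (∫ t in y..(1:ℝ), |t - d| ^ (2*p)) = ((d-y) ^ (2*p+1) + (1-d) ^ (2*p+1)) / (2*p+1) :=
    abs_rpow_integral hyd hd h2p
  have hlin : Continuous fun t : ℝ => t * |f'' a| ^ q + (1 - t) * |f'' b| ^ q := by fun_prop
  have hS1 : (∫ t in (0:ℝ)..y, |f'' (t*a+(1-t)*b)| ^ q)
      ≤ (y^2 * |f'' a| ^ q + (2*y - y^2) * |f'' b| ^ q) / 2 := by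
    refine le_trans (intervalIntegral.integral_mono_on hy0.le (hInthq 0 y le_rfl hy1.le hy0.le)
      (hlin.intervalIntegrable _ _)
      (fun t ht => hB t ⟨ht.1, le_trans ht.2 hy1.le⟩)) ?_
    rw [lin_integral]
    ring_nf
    exact le_refl _
  have hS2 : (∫ t in y..(1:ℝ), |f'' (t*a+(1-t)*b)| ^ q)
      ≤ ((1 - y^2) * |f'' a| ^ q + (1-y)^2 * |f'' b| ^ q) / 2 := by
    refine le_trans (intervalIntegral.integral_mono_on hy1.le (hInthq y 1 hy0.le le_rfl hy1.le)
      (hlin.intervalIntegrable _ _)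
      (fun t ht => hB t ⟨le_trans hy0.le ht.1, ht.2⟩)) ?_
    rw [lin_integral]
    ring_nf
    exact le_refl _
  have hS1nn : (0:ℝ) ≤ ∫ t in (0:ℝ)..y, |f'' (t*a+(1-t)*b)| ^ q :=
    intervalIntegral.integral_nonneg hy0.le (fun t _ => Real.rpow_nonneg (abs_nonneg _) _)
  have hS2nn : (0:ℝ) ≤ ∫ t in y..(1:ℝ), |f'' (t*a+(1-t)*b)| ^ q :=
    intervalIntegral.integral_nonneg hy1.le (fun t _ => Real.rpow_nonneg (abs_nonneg _) _)
  have hD1nn : (0:ℝ) ≤ c ^ (2*p+1) + (y-c) ^ (2*p+1) :=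
    add_nonneg (Real.rpow_nonneg hc _) (Real.rpow_nonneg (by linarith) _)
  have hD2nn : (0:ℝ) ≤ (d-y) ^ (2*p+1) + (1-d) ^ (2*p+1) :=
    add_nonneg (Real.rpow_nonneg (by linarith) _) (Real.rpow_nonneg (by linarith) _)
  have hT1 : |∫ t in (0:ℝ)..y, (t - c)^2 * f'' (t*a+(1-t)*b)|
      ≤ (1/(2*p+1)) ^ (1/p) * ((c ^ (2*p+1) + (y-c) ^ (2*p+1)) ^ (1/p) *
          ((y^2 * |f'' a| ^ q + (2*y - y^2) * |f'' b| ^ q) / 2) ^ (1/q)) := by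
    refine hQ1.trans ?_
    have e : ((∫ t in (0:ℝ)..y, |t - c| ^ (2*p))) ^ (1/p)
        = (1/(2*p+1)) ^ (1/p) * (c ^ (2*p+1) + (y-c) ^ (2*p+1)) ^ (1/p) := by
      rw [hD1, show (c ^ (2*p+1) + (y-c) ^ (2*p+1)) / (2*p+1)
        = (1/(2*p+1)) * (c ^ (2*p+1) + (y-c) ^ (2*p+1)) by ring,
        Real.mul_rpow (by positivity) hD1nn]
    rw [e, mul_assoc]
    refine mul_le_mul_of_nonneg_left ?_ (by positivity)
    exact mul_le_mul_of_nonneg_left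
      (Real.rpow_le_rpow hS1nn hS1 (by positivity)) (Real.rpow_nonneg hD1nn _)
  have hT2 : |∫ t in y..(1:ℝ), (t - d)^2 * f'' (t*a+(1-t)*b)|
      ≤ (1/(2*p+1)) ^ (1/p) * (((d-y) ^ (2*p+1) + (1-d) ^ (2*p+1)) ^ (1/p) *
          (((1 - y^2) * |f'' a| ^ q + (1-y)^2 * |f'' b| ^ q) / 2) ^ (1/q)) := by
    refine hQ2.trans ?_
    have e : ((∫ t in y..(1:ℝ), |t - d| ^ (2*p))) ^ (1/p)
        = (1/(2*p+1)) ^ (1/p) * ((d-y) ^ (2*p+1) + (1-d) ^ (2*p+1)) ^ (1/p) := by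
      rw [hD2, show ((d-y) ^ (2*p+1) + (1-d) ^ (2*p+1)) / (2*p+1)
        = (1/(2*p+1)) * ((d-y) ^ (2*p+1) + (1-d) ^ (2*p+1)) by ring,
        Real.mul_rpow (by positivity) hD2nn]
    rw [e, mul_assoc]
    refine mul_le_mul_of_nonneg_left ?_ (by positivity)
    exact mul_le_mul_of_nonneg_left
      (Real.rpow_le_rpow hS2nn hS2 (by positivity)) (Real.rpow_nonneg hD2nn _)
  -- final assembly
  rw [key, hfac1, hfac2]
  have habs : |(1/2 : ℝ) * ((a-b)^2 * (∫ t in (0:ℝ)..y, (t - c)^2 * f'' (t*a+(1-t)*b))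
        + (a-b)^2 * ∫ t in y..(1:ℝ), (t - d)^2 * f'' (t*a+(1-t)*b))|
      ≤ (1/2) * ((b-a)^2 * |∫ t in (0:ℝ)..y, (t - c)^2 * f'' (t*a+(1-t)*b)|
        + (b-a)^2 * |∫ t in y..(1:ℝ), (t - d)^2 * f'' (t*a+(1-t)*b)|) := by
    rw [abs_mul, show |(1/2 : ℝ)| = 1/2 by norm_num]
    refine mul_le_mul_of_nonneg_left ?_ (by norm_num)
    refine (abs_add_le _ _).trans ?_
    rw [abs_mul, abs_mul, abs_of_nonneg (sq_nonneg (a-b)),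
      show ((a-b)^2 : ℝ) = (b-a)^2 by ring]
  refine habs.trans ?_
  calc (1/2 : ℝ) * ((b-a)^2 * |∫ t in (0:ℝ)..y, (t - c)^2 * f'' (t*a+(1-t)*b)|
        + (b-a)^2 * |∫ t in y..(1:ℝ), (t - d)^2 * f'' (t*a+(1-t)*b)|)
      ≤ (1/2) * ((b-a)^2 * ((1/(2*p+1)) ^ (1/p) * ((c ^ (2*p+1) + (y-c) ^ (2*p+1)) ^ (1/p) *
            ((y^2 * |f'' a| ^ q + (2*y - y^2) * |f'' b| ^ q) / 2) ^ (1/q)))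
        + (b-a)^2 * ((1/(2*p+1)) ^ (1/p) * (((d-y) ^ (2*p+1) + (1-d) ^ (2*p+1)) ^ (1/p) *
            (((1 - y^2) * |f'' a| ^ q + (1-y)^2 * |f'' b| ^ q) / 2) ^ (1/q)))) := by
        refine mul_le_mul_of_nonneg_left ?_ (by norm_num)
        exact add_le_add (mul_le_mul_of_nonneg_left hT1 (sq_nonneg _))
          (mul_le_mul_of_nonneg_left hT2 (sq_nonneg _))
    _ = _ := by ring
end

section
/- Let a < b be real numbers and let f : ℝ → ℝ be twice differentiable on an open interval containing [a,b] with f'' Lebesgue integrable on [a,b]. Let p, q > 1 satisfy 1/p + 1/q = 1. If the function x ↦ |f''(x)|^q is convex on [a,b] and f'(a) = f'(b), then |(1/(b−a))·∫_a^b f(x) dx − (f(a)+f(b))/2| ≤ ((b−a)²/(16·(2p+1)^(1/p))) · ( ((|f''(a)|^q + 3·|f''(b)|^q)/4)^(1/q) + ((3·|f''(a)|^q + |f''(b)|^q)/4)^(1/q) ). -/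
open MeasureTheory

private lemma holder_half_aux (p q : ℝ) (hp : 1 < p) (hq : 1 < q) (hpq : 1 / p + 1 / q = 1)
    (c d : ℝ) (hcd : c ≤ d) (K g : ℝ → ℝ)
    (hKc : Continuous K) (hKnn : ∀ x, 0 ≤ K x)
    (hgm : AEStronglyMeasurable g (volume.restrict (Set.Ioc c d)))
    (M : ℝ) (hM : ∀ x ∈ Set.Icc c d, |g x| ≤ M) :
    ∫ x in c..d, K x * |g x| ≤
      (∫ x in c..d, K x ^ p) ^ (1/p) * (∫ x in c..d, |g x| ^ q) ^ (1/q) := by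
  have hpq' : Real.HolderConjugate p q := Real.holderConjugate_iff.2 ⟨hp, by rw [← one_div, ← one_div]; exact hpq⟩
  rw [intervalIntegral.integral_of_le hcd, intervalIntegral.integral_of_le hcd,
    intervalIntegral.integral_of_le hcd]
  set μ := volume.restrict (Set.Ioc c d) with hμ
  haveI : IsFiniteMeasure μ := ⟨by
    rw [hμ, Measure.restrict_apply_univ]; exact measure_Ioc_lt_top⟩
  obtain ⟨C, hC⟩ : ∃ C, ∀ x ∈ Set.Icc c d, ‖K x‖ ≤ C :=
    isCompact_Icc.exists_bound_of_continuousOn hKc.continuousOn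
  have hKm : MemLp K (ENNReal.ofReal p) μ := by
    refine MemLp.of_bound hKc.aestronglyMeasurable.restrict C ?_
    exact (ae_restrict_iff' measurableSet_Ioc).2
      (Filter.Eventually.of_forall fun x hx => hC x (Set.Ioc_subset_Icc_self hx))
  have hgm' : AEStronglyMeasurable (fun x => |g x|) μ := by
    have := hgm.norm
    simpa [Real.norm_eq_abs] using this
  have hgmem : MemLp (fun x => |g x|) (ENNReal.ofReal q) μ := by
    refine MemLp.of_bound hgm' M ?_
    refine (ae_restrict_iff' measurableSet_Ioc).2
      (Filter.Eventually.of_forall fun x hx => ?_)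
    have := hM x (Set.Ioc_subset_Icc_self hx)
    simpa [Real.norm_eq_abs, abs_abs] using this
  exact integral_mul_le_Lp_mul_Lq_of_nonneg hpq'
    (Filter.Eventually.of_forall fun x => hKnn x)
    (Filter.Eventually.of_forall fun x => abs_nonneg _) hKm hgmem

/-- Corollary: trapezoid Hölder-type inequality for |f''|^q convex,
assuming f'(a) = f'(b). -/
theorem stmt_6 (f f' f'' : ℝ → ℝ) (a b u v p q : ℝ) (hab : a < b)
(hua : u < a) (hbv : b < v)
    (hf' : ∀ x ∈ Set.Ioo u v, HasDerivAt f (f' x) x)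
    (hf'' : ∀ x ∈ Set.Ioo u v, HasDerivAt f' (f'' x) x)
    (hint : IntervalIntegrable f'' MeasureTheory.volume a b)
    (hp : 1 < p) (hq : 1 < q) (hpq : 1 / p + 1 / q = 1)
    (hconv : ConvexOn ℝ (Set.Icc a b) (fun x => |f'' x| ^ q))
    (hder : f' a = f' b) :
    |(1 / (b - a)) * (∫ x in a..b, f x) - (f a + f b) / 2|
      ≤ ((b - a) ^ 2 / (16 * (2 * p + 1) ^ (1 / p))) *
          (((|f'' a| ^ q + 3 * |f'' b| ^ q) / 4) ^ (1 / q)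
            + ((3 * |f'' a| ^ q + |f'' b| ^ q) / 4) ^ (1 / q)) := by
  have hba : (0:ℝ) < b - a := sub_pos.2 hab
  set m : ℝ := (a+b)/2 with hm
  have ham : a < m := by rw [hm]; linarith
  have hmb : m < b := by rw [hm]; linarith
  set A : ℝ := |f'' a| ^ q with hA
  set B : ℝ := |f'' b| ^ q with hB
  have hAnn : 0 ≤ A := Real.rpow_nonneg (abs_nonneg _) q
  have hBnn : 0 ≤ B := Real.rpow_nonneg (abs_nonneg _) q
  have hp0 : (0:ℝ) < p := lt_trans zero_lt_one hp
  have hq0 : (0:ℝ) < q := lt_trans zero_lt_one hq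
  set D : ℝ := (2*p+1) ^ (1/p) with hD
  have hDpos : 0 < D := Real.rpow_pos_of_pos (by linarith) _
  set h : ℝ := (b - a)/2 with hh
  have hhpos : 0 < h := by rw [hh]; linarith
  -- inclusion
  have hsub : Set.uIcc a b ⊆ Set.Ioo u v := by
    rw [Set.uIcc_of_le hab.le]
    exact fun x hx => ⟨hua.trans_le hx.1, hx.2.trans_lt hbv⟩
  have hcontf' : ContinuousOn f' (Set.uIcc a b) := fun x hx =>
    ((hf'' x (hsub hx)).continuousAt.continuousWithinAt)
  have hcontf : ContinuousOn f (Set.uIcc a b) := fun x hx =>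
    ((hf' x (hsub hx)).continuousAt.continuousWithinAt)
  have hintf' : IntervalIntegrable f' volume a b := hcontf'.intervalIntegrable
  have hintf : IntervalIntegrable f volume a b := hcontf.intervalIntegrable
  -- Step 1 : the identity
  have ibp1 : ∫ x in a..b, (x - m)^2 * f'' x =
      (b-m)^2 * f' b - (a-m)^2 * f' a - ∫ x in a..b, (2*(x-m)) * f' x := by
    apply intervalIntegral.integral_mul_deriv_eq_deriv_mul
    · intro x hx
      have hd := ((hasDerivAt_id x).sub_const m).pow 2
      simp at hd; exact hd
    · exact fun x hx => hf'' x (hsub hx)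
    · exact ((continuous_const.mul (continuous_id.sub continuous_const)).intervalIntegrable a b)
    · exact hint
  have ibp2 : ∫ x in a..b, (2*(x-m)) * f' x =
      2*(b-m) * f b - 2*(a-m) * f a - ∫ x in a..b, 2 * f x := by
    apply intervalIntegral.integral_mul_deriv_eq_deriv_mul
    · intro x hx
      have hd := (((hasDerivAt_id x).sub_const m).const_mul 2)
      simpa using hd
    · exact fun x hx => hf' x (hsub hx)
    · exact intervalIntegrable_const
    · exact hintf'
  have h2 : ∫ x in a..b, 2 * f x = 2 * ∫ x in a..b, f x := by
    simpa using intervalIntegral.integral_const_mul 2 f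
  have eq1 : (1 / (b - a)) * (∫ x in a..b, f x) - (f a + f b) / 2
      = (1 / (2 * (b - a))) * ∫ x in a..b, (x - m)^2 * f'' x := by
    rw [ibp1, ibp2, h2, hder]
    have hba' : b - a ≠ 0 := ne_of_gt hba
    field_simp
    ring
  -- convexity consequences
  have hconvx : ∀ x ∈ Set.Icc a b, |f'' x| ^ q ≤ ((b-x)*A + (x-a)*B)/(b-a) := by
    intro x hx
    have hs : (0:ℝ) ≤ (b-x)/(b-a) := by
      apply div_nonneg _ hba.le; linarith [hx.2]
    have ht : (0:ℝ) ≤ (x-a)/(b-a) := by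
      apply div_nonneg _ hba.le; linarith [hx.1]
    have hst : (b-x)/(b-a) + (x-a)/(b-a) = 1 := by
      field_simp
      ring
    have key := hconv.2 (Set.left_mem_Icc.2 hab.le) (Set.right_mem_Icc.2 hab.le) hs ht hst
    have hxeq : ((b-x)/(b-a)) • a + ((x-a)/(b-a)) • b = x := by
      have : b - a ≠ 0 := ne_of_gt hba
      rw [smul_eq_mul, smul_eq_mul, div_mul_eq_mul_div, div_mul_eq_mul_div, ← add_div,
        div_eq_iff this]
      ring
    rw [hxeq] at key
    simp only [smul_eq_mul] at key
    calc |f'' x| ^ q ≤ ((b-x)/(b-a)) * A + ((x-a)/(b-a)) * B := key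
      _ = ((b-x)*A + (x-a)*B)/(b-a) := by ring
  have hmaxbd : ∀ x ∈ Set.Icc a b, |f'' x| ^ q ≤ max A B := by
    intro x hx
    refine le_trans (hconvx x hx) ?_
    rw [div_le_iff₀ hba]
    have h1 : (b-x)*A ≤ (b-x)*(max A B) :=
      mul_le_mul_of_nonneg_left (le_max_left _ _) (by linarith [hx.2])
    have h2 : (x-a)*B ≤ (x-a)*(max A B) :=
      mul_le_mul_of_nonneg_left (le_max_right _ _) (by linarith [hx.1])
    have h3 : (b-x)*(max A B) + (x-a)*(max A B) = (max A B)*(b-a) := by ring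
    linarith
  have hfbd : ∀ x ∈ Set.Icc a b, |f'' x| ≤ (max A B) ^ (1/q) := by
    intro x hx
    have h2 : (|f'' x| ^ q) ^ (1/q) ≤ (max A B) ^ (1/q) :=
      Real.rpow_le_rpow (Real.rpow_nonneg (abs_nonneg _) q) (hmaxbd x hx) (by positivity)
    rw [one_div, Real.rpow_rpow_inv (abs_nonneg _) (ne_of_gt hq0)] at h2
    rwa [one_div]
  -- measurability
  have hmeas : AEStronglyMeasurable f'' (volume.restrict (Set.Ioc a b)) :=
    (intervalIntegrable_iff_integrableOn_Ioc_of_le hab.le).1 hint |>.aestronglyMeasurable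
  have hmeas1 : AEStronglyMeasurable f'' (volume.restrict (Set.Ioc a m)) :=
    hmeas.mono_measure (Measure.restrict_mono (Set.Ioc_subset_Ioc le_rfl hmb.le) le_rfl)
  have hmeas2 : AEStronglyMeasurable f'' (volume.restrict (Set.Ioc m b)) :=
    hmeas.mono_measure (Measure.restrict_mono (Set.Ioc_subset_Ioc ham.le le_rfl) le_rfl)
  have hrpow_cont : Continuous fun t : ℝ => |t| ^ q := by
    apply Continuous.comp (g := fun t : ℝ => t ^ q) _ continuous_abs
    rw [continuous_iff_continuousAt]
    exact fun x => Real.continuousAt_rpow_const _ _ (Or.inr hq0.le)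
  -- integrability of |f''|^q on subintervals
  have hGint : ∀ c d : ℝ, c ≤ d → Set.Icc c d ⊆ Set.Icc a b →
      AEStronglyMeasurable f'' (volume.restrict (Set.Ioc c d)) →
      IntervalIntegrable (fun x => |f'' x| ^ q) volume c d := by
    intro c d hcd hss hms
    rw [intervalIntegrable_iff_integrableOn_Ioc_of_le hcd]
    haveI : IsFiniteMeasure (volume.restrict (Set.Ioc c d)) := ⟨by
      rw [Measure.restrict_apply_univ]; exact measure_Ioc_lt_top⟩
    have hmq : AEStronglyMeasurable (fun x => |f'' x| ^ q)
        (volume.restrict (Set.Ioc c d)) := hrpow_cont.comp_aestronglyMeasurable hms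
    refine memLp_one_iff_integrable.1 (MemLp.of_bound hmq (max A B) ?_)
    refine (ae_restrict_iff' measurableSet_Ioc).2
      (Filter.Eventually.of_forall fun x hx => ?_)
    have hxab : x ∈ Set.Icc a b := hss (Set.Ioc_subset_Icc_self hx)
    have h1 : |f'' x| ^ q ≤ max A B := hmaxbd x hxab
    have hnn : 0 ≤ |f'' x| ^ q := Real.rpow_nonneg (abs_nonneg _) q
    rw [Real.norm_eq_abs, abs_of_nonneg hnn]
    exact h1
  have hG1 : IntervalIntegrable (fun x => |f'' x| ^ q) volume a m :=
    hGint a m ham.le (Set.Icc_subset_Icc le_rfl hmb.le) hmeas1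
  have hG2 : IntervalIntegrable (fun x => |f'' x| ^ q) volume m b :=
    hGint m b hmb.le (Set.Icc_subset_Icc ham.le le_rfl) hmeas2
  -- kernel integrability and split
  have hker : Continuous fun x : ℝ => (x - m)^2 :=
    (continuous_id.sub continuous_const).pow 2
  have hprod : IntervalIntegrable (fun x => (x - m)^2 * f'' x) volume a b :=
    hint.continuousOn_mul hker.continuousOn
  have hprod1 : IntervalIntegrable (fun x => (x - m)^2 * f'' x) volume a m :=
    hprod.mono_set (by
      rw [Set.uIcc_of_le ham.le, Set.uIcc_of_le hab.le]
      exact Set.Icc_subset_Icc le_rfl hmb.le)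
  have hprod2 : IntervalIntegrable (fun x => (x - m)^2 * f'' x) volume m b :=
    hprod.mono_set (by
      rw [Set.uIcc_of_le hmb.le, Set.uIcc_of_le hab.le]
      exact Set.Icc_subset_Icc ham.le le_rfl)
  have hsplit : ∫ x in a..b, (x - m)^2 * f'' x
      = (∫ x in a..m, (x - m)^2 * f'' x) + ∫ x in m..b, (x - m)^2 * f'' x :=
    (intervalIntegral.integral_add_adjacent_intervals hprod1 hprod2).symm
  -- abs bounds
  have habs1 : |∫ x in a..m, (x - m)^2 * f'' x| ≤ ∫ x in a..m, (x - m)^2 * |f'' x| := by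
    refine le_trans (intervalIntegral.abs_integral_le_integral_abs ham.le) (le_of_eq ?_)
    apply intervalIntegral.integral_congr
    intro x hx
    simp only [abs_mul, abs_of_nonneg (sq_nonneg (x - m))]
  have habs2 : |∫ x in m..b, (x - m)^2 * f'' x| ≤ ∫ x in m..b, (x - m)^2 * |f'' x| := by
    refine le_trans (intervalIntegral.abs_integral_le_integral_abs hmb.le) (le_of_eq ?_)
    apply intervalIntegral.integral_congr
    intro x hx
    simp only [abs_mul, abs_of_nonneg (sq_nonneg (x - m))]
  -- Hölder
  have hH1 : ∫ x in a..m, (x - m)^2 * |f'' x| ≤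
      (∫ x in a..m, ((x - m)^2) ^ p) ^ (1/p) * (∫ x in a..m, |f'' x| ^ q) ^ (1/q) :=
    holder_half_aux p q hp hq hpq a m ham.le _ f'' hker (fun x => sq_nonneg _) hmeas1
      ((max A B) ^ (1/q)) (fun x hx => hfbd x (Set.Icc_subset_Icc le_rfl hmb.le hx))
  have hH2 : ∫ x in m..b, (x - m)^2 * |f'' x| ≤
      (∫ x in m..b, ((x - m)^2) ^ p) ^ (1/p) * (∫ x in m..b, |f'' x| ^ q) ^ (1/q) :=
    holder_half_aux p q hp hq hpq m b hmb.le _ f'' hker (fun x => sq_nonneg _) hmeas2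
      ((max A B) ^ (1/q)) (fun x hx => hfbd x (Set.Icc_subset_Icc ham.le le_rfl hx))
  -- kernel integrals
  have h2p1 : (0:ℝ) < 2*p+1 := by linarith
  have hma : m - a = h := by rw [hm, hh]; ring
  have hbm : b - m = h := by rw [hm, hh]; ring
  have hkint1 : ∫ x in a..m, ((x - m)^2) ^ p = h ^ (2*p+1) / (2*p+1) := by
    have hcg : ∀ x ∈ Set.uIcc a m, ((x - m)^2 : ℝ) ^ p = (fun y : ℝ => y ^ (2*p)) (m - x) := by
      intro x hx
      rw [Set.uIcc_of_le ham.le] at hx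
      have h1 : (x - m)^2 = (m - x)^2 := by ring
      have h2 : (0:ℝ) ≤ m - x := by linarith [hx.2]
      rw [h1, ← Real.rpow_natCast (m - x) 2, ← Real.rpow_mul h2]
      norm_num
    rw [intervalIntegral.integral_congr hcg,
      intervalIntegral.integral_comp_sub_left (fun y : ℝ => y ^ (2*p)) m,
      sub_self, integral_rpow (Or.inl (by linarith : (-1:ℝ) < 2*p)),
      Real.zero_rpow (by linarith : 2*p+1 ≠ 0), hma]
    ring_nf
  have hkint2 : ∫ x in m..b, ((x - m)^2) ^ p = h ^ (2*p+1) / (2*p+1) := by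
    have hcg : ∀ x ∈ Set.uIcc m b, ((x - m)^2 : ℝ) ^ p = (fun y : ℝ => y ^ (2*p)) (x - m) := by
      intro x hx
      rw [Set.uIcc_of_le hmb.le] at hx
      have h2 : (0:ℝ) ≤ x - m := by linarith [hx.1]
      rw [← Real.rpow_natCast (x - m) 2, ← Real.rpow_mul h2]
      norm_num
    rw [intervalIntegral.integral_congr hcg,
      intervalIntegral.integral_comp_sub_right (fun y : ℝ => y ^ (2*p)) m,
      sub_self, integral_rpow (Or.inl (by linarith : (-1:ℝ) < 2*p)),
      Real.zero_rpow (by linarith : 2*p+1 ≠ 0), hbm]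
    ring_nf
  -- q-integral bounds
  have hlin : ∀ c1 c2 c d : ℝ, ∫ x in c..d, (c1 + c2*x) = c1*(d-c) + c2*(d^2-c^2)/2 := by
    intro c1 c2 c d
    rw [intervalIntegral.integral_add (f := fun _ => c1) (g := fun x => c2 * x) intervalIntegrable_const
      ((continuous_const.mul continuous_id').intervalIntegrable _ _),
      intervalIntegral.integral_const_mul, integral_id, intervalIntegral.integral_const]
    simp [smul_eq_mul]; ring
  have hba' : b - a ≠ 0 := ne_of_gt hba
  have hq1 : ∫ x in a..m, |f'' x| ^ q ≤ h * ((3*A+B)/4) := by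
    have hmono : ∫ x in a..m, |f'' x| ^ q ≤
        ∫ x in a..m, ((b*A - a*B)/(b-a) + ((B-A)/(b-a))*x) := by
      refine intervalIntegral.integral_mono_on ham.le hG1
        ((continuous_const.add (continuous_const.mul continuous_id')).intervalIntegrable _ _) ?_
      intro x hx
      have hxab : x ∈ Set.Icc a b := Set.Icc_subset_Icc le_rfl hmb.le hx
      refine le_trans (hconvx x hxab) (le_of_eq ?_)
      field_simp
      ring
    refine le_trans hmono (le_of_eq ?_)
    rw [hlin]
    rw [hm, hh]
    field_simp
    ring
  have hq2 : ∫ x in m..b, |f'' x| ^ q ≤ h * ((A+3*B)/4) := by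
    have hmono : ∫ x in m..b, |f'' x| ^ q ≤
        ∫ x in m..b, ((b*A - a*B)/(b-a) + ((B-A)/(b-a))*x) := by
      refine intervalIntegral.integral_mono_on hmb.le hG2
        ((continuous_const.add (continuous_const.mul continuous_id')).intervalIntegrable _ _) ?_
      intro x hx
      have hxab : x ∈ Set.Icc a b := Set.Icc_subset_Icc ham.le le_rfl hx
      refine le_trans (hconvx x hxab) (le_of_eq ?_)
      field_simp
      ring
    refine le_trans hmono (le_of_eq ?_)
    rw [hlin]
    rw [hm, hh]
    field_simp
    ring
  -- rpow algebra
  have hq1' : (∫ x in a..m, |f'' x| ^ q) ^ (1/q) ≤ (h * ((3*A+B)/4)) ^ (1/q) :=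
    Real.rpow_le_rpow (intervalIntegral.integral_nonneg ham.le
      (fun x _ => Real.rpow_nonneg (abs_nonneg _) q)) hq1 (by positivity)
  have hq2' : (∫ x in m..b, |f'' x| ^ q) ^ (1/q) ≤ (h * ((A+3*B)/4)) ^ (1/q) :=
    Real.rpow_le_rpow (intervalIntegral.integral_nonneg hmb.le
      (fun x _ => Real.rpow_nonneg (abs_nonneg _) q)) hq2 (by positivity)
  have hcoef : (h ^ (2*p+1) / (2*p+1)) ^ (1/p) = h ^ ((2*p+1) * (1/p)) / D := by
    rw [Real.div_rpow (Real.rpow_nonneg hhpos.le _) (le_of_lt h2p1),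
      ← Real.rpow_mul hhpos.le, ← hD]
  have hexp : (2*p+1) * (1/p) + 1/q = 3 := by
    have hpne : p ≠ 0 := ne_of_gt hp0
    have hqne : q ≠ 0 := ne_of_gt hq0
    field_simp at hpq ⊢
    linarith [hpq]
  have hmul3 : h ^ ((2*p+1)*(1/p)) * h ^ (1/q) = h ^ (3:ℕ) := by
    rw [← Real.rpow_add hhpos, hexp, ← Real.rpow_natCast h 3]
    norm_num
  have key1 : (∫ x in a..m, ((x - m)^2) ^ p) ^ (1/p) * (∫ x in a..m, |f'' x| ^ q) ^ (1/q)
      ≤ (h^(3:ℕ) / D) * ((3*A+B)/4) ^ (1/q) := by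
    rw [hkint1, hcoef]
    have e2 : (h*((3*A+B)/4)) ^ (1/q) = h^(1/q) * ((3*A+B)/4)^(1/q) :=
      Real.mul_rpow hhpos.le (by positivity)
    calc h ^ ((2*p+1)*(1/p)) / D * (∫ x in a..m, |f'' x| ^ q) ^ (1/q)
        ≤ h ^ ((2*p+1)*(1/p)) / D * (h*((3*A+B)/4)) ^ (1/q) :=
          mul_le_mul_of_nonneg_left hq1' (by positivity)
      _ = (h ^ ((2*p+1)*(1/p)) * h ^ (1/q)) / D * ((3*A+B)/4)^(1/q) := by rw [e2]; ring
      _ = (h^(3:ℕ)/D) * ((3*A+B)/4)^(1/q) := by rw [hmul3]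
  have key2 : (∫ x in m..b, ((x - m)^2) ^ p) ^ (1/p) * (∫ x in m..b, |f'' x| ^ q) ^ (1/q)
      ≤ (h^(3:ℕ) / D) * ((A+3*B)/4) ^ (1/q) := by
    rw [hkint2, hcoef]
    have e2 : (h*((A+3*B)/4)) ^ (1/q) = h^(1/q) * ((A+3*B)/4)^(1/q) :=
      Real.mul_rpow hhpos.le (by positivity)
    calc h ^ ((2*p+1)*(1/p)) / D * (∫ x in m..b, |f'' x| ^ q) ^ (1/q)
        ≤ h ^ ((2*p+1)*(1/p)) / D * (h*((A+3*B)/4)) ^ (1/q) :=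
          mul_le_mul_of_nonneg_left hq2' (by positivity)
      _ = (h ^ ((2*p+1)*(1/p)) * h ^ (1/q)) / D * ((A+3*B)/4)^(1/q) := by rw [e2]; ring
      _ = (h^(3:ℕ)/D) * ((A+3*B)/4)^(1/q) := by rw [hmul3]
  -- combine
  have hcpos : (0:ℝ) < 1/(2*(b-a)) := by positivity
  calc |(1 / (b - a)) * (∫ x in a..b, f x) - (f a + f b) / 2|
      = (1/(2*(b-a))) * |∫ x in a..b, (x - m)^2 * f'' x| := by
        rw [eq1, abs_mul, abs_of_pos hcpos]
    _ ≤ (1/(2*(b-a))) * ((h^(3:ℕ)/D) * ((3*A+B)/4)^(1/q) + (h^(3:ℕ)/D) * ((A+3*B)/4)^(1/q)) := by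
        refine mul_le_mul_of_nonneg_left ?_ hcpos.le
        calc |∫ x in a..b, (x - m)^2 * f'' x|
            ≤ |∫ x in a..m, (x - m)^2 * f'' x| + |∫ x in m..b, (x - m)^2 * f'' x| := by
              rw [hsplit]; exact abs_add_le _ _
          _ ≤ (∫ x in a..m, (x - m)^2 * |f'' x|) + ∫ x in m..b, (x - m)^2 * |f'' x| :=
              add_le_add habs1 habs2
          _ ≤ _ := add_le_add (le_trans hH1 key1) (le_trans hH2 key2)
    _ = ((b - a) ^ 2 / (16 * D)) * (((A + 3*B)/4) ^ (1/q) + ((3*A + B)/4) ^ (1/q)) := by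
        rw [hh]
        have hDne : D ≠ 0 := ne_of_gt hDpos
        field_simp
        ring
end

section
/- Let a < b be real numbers and let f : ℝ → ℝ be twice differentiable on an open interval containing [a,b] with f'' Lebesgue integrable on [a,b]. Let c, y, d be real numbers with 0 ≤ c ≤ y ≤ d ≤ 1 and 0 < y < 1, and let q ≥ 1. If the function x ↦ |f''(x)|^q is convex on [a,b], then |E(f;a,b;c,y,d)| ≤ ((b−a)²/6) · ( (c³ − (c−y)³)^(1−1/q) · ((M·|f''(a)|^q + N·|f''(b)|^q)/4)^(1/q) + ((d−y)³ − (d−1)³)^(1−1/q) · ((P·|f''(a)|^q + Q·|f''(b)|^q)/4)^(1/q) ), where M = c⁴ − (c−y)³·(c+3y), N = 4c³ − c⁴ + (c−y)³·(c+3y−4), P = (d−y)³·(d+3y) − (d−1)³·(d+3), and Q = (d−y)³·(4−d−3y) + (d−1)⁴. -/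
open MeasureTheory intervalIntegral Set

lemma holder_aux {s t q : ℝ} (hst : s ≤ t) (hq : 1 ≤ q)
    (w h : ℝ → ℝ) (hw : Continuous w) (hh : Continuous h)
    (hw0 : ∀ x ∈ Set.Icc s t, 0 ≤ w x) (hh0 : ∀ x ∈ Set.Icc s t, 0 ≤ h x) :
    ∫ x in s..t, w x * h x ^ (1/q) ≤
      (∫ x in s..t, w x) ^ (1 - 1/q) * (∫ x in s..t, w x * h x) ^ (1/q) := by
  rcases eq_or_lt_of_le hq with hq1 | hq1
  · subst hq1
    simp [Real.rpow_one]
  have hq0 : 0 < q := lt_trans one_pos hq1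
  set p : ℝ := q / (q - 1) with hp
  have hpq : p.HolderConjugate q := (Real.HolderConjugate.conjExponent hq1).symm
  have hp0 : 0 < p := hpq.pos
  have hinvp : 1 / p = 1 - 1 / q := by
    field_simp [hp]
    rw [hp]; field_simp
  set μ : Measure ℝ := volume.restrict (Set.Ioc s t) with hμ
  haveI : IsFiniteMeasure μ := by
    constructor
    rw [hμ, Measure.restrict_apply_univ, Real.volume_Ioc]
    exact ENNReal.ofReal_lt_top
  -- functions
  set F : ℝ → ℝ := fun x => w x ^ (1/p) with hF
  set G : ℝ → ℝ := fun x => (w x * h x) ^ (1/q) with hG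
  have hFc : Continuous F := hw.rpow_const (fun x => Or.inr (by positivity))
  have hGc : Continuous G := (hw.mul hh).rpow_const (fun x => Or.inr (by positivity))
  have hFm : MemLp F (ENNReal.ofReal p) μ := by
    obtain ⟨C, hC⟩ := (isCompact_Icc (a := s) (b := t)).exists_bound_of_continuousOn
      hFc.continuousOn
    exact MemLp.of_bound hFc.aestronglyMeasurable.restrict C
      ((ae_restrict_iff' measurableSet_Ioc).2 (Filter.Eventually.of_forall
        fun x hx => hC x (Set.Ioc_subset_Icc_self hx)))
  have hGm : MemLp G (ENNReal.ofReal q) μ := by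
    obtain ⟨C, hC⟩ := (isCompact_Icc (a := s) (b := t)).exists_bound_of_continuousOn
      hGc.continuousOn
    exact MemLp.of_bound hGc.aestronglyMeasurable.restrict C
      ((ae_restrict_iff' measurableSet_Ioc).2 (Filter.Eventually.of_forall
        fun x hx => hC x (Set.Ioc_subset_Icc_self hx)))
  have key := MeasureTheory.integral_mul_le_Lp_mul_Lq_of_nonneg (μ := μ) hpq
    ((ae_restrict_iff' measurableSet_Ioc).2 (Filter.Eventually.of_forall
      fun x hx => Real.rpow_nonneg (hw0 x (Set.Ioc_subset_Icc_self hx)) _))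
    ((ae_restrict_iff' measurableSet_Ioc).2 (Filter.Eventually.of_forall
      fun x hx => Real.rpow_nonneg (mul_nonneg (hw0 x (Set.Ioc_subset_Icc_self hx)) (hh0 x (Set.Ioc_subset_Icc_self hx))) _)) hFm hGm
  have e1 : ∫ x, F x * G x ∂μ = ∫ x in s..t, w x * h x ^ (1/q) := by
    rw [intervalIntegral.integral_of_le hst]
    refine setIntegral_congr_fun measurableSet_Ioc (fun x hx => ?_)
    have hwx := hw0 x (Set.Ioc_subset_Icc_self hx)
    have hhx := hh0 x (Set.Ioc_subset_Icc_self hx)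
    show w x ^ (1/p) * (w x * h x) ^ (1/q) = w x * h x ^ (1/q)
    rw [Real.mul_rpow hwx hhx, ← mul_assoc, ← Real.rpow_add_of_nonneg hwx (by positivity)
      (by positivity), hinvp]
    norm_num
  have e2 : ∫ x, F x ^ p ∂μ = ∫ x in s..t, w x := by
    rw [intervalIntegral.integral_of_le hst]
    refine setIntegral_congr_fun measurableSet_Ioc (fun x hx => ?_)
    have hwx := hw0 x (Set.Ioc_subset_Icc_self hx)
    show (w x ^ (1/p)) ^ p = w x
    rw [← Real.rpow_mul hwx, one_div, inv_mul_cancel₀ (ne_of_gt hp0), Real.rpow_one]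
  have e3 : ∫ x, G x ^ q ∂μ = ∫ x in s..t, w x * h x := by
    rw [intervalIntegral.integral_of_le hst]
    refine setIntegral_congr_fun measurableSet_Ioc (fun x hx => ?_)
    have hwx := hw0 x (Set.Ioc_subset_Icc_self hx)
    have hhx := hh0 x (Set.Ioc_subset_Icc_self hx)
    show ((w x * h x) ^ (1/q)) ^ q = w x * h x
    rw [← Real.rpow_mul (by positivity), one_div, inv_mul_cancel₀ (ne_of_gt hq0),
      Real.rpow_one]
  rw [e1, e2, e3, hinvp] at key
  exact key


lemma mom1 (r s e : ℝ) : ∫ t in r..s, (t-e)^2/2 = ((s-e)^3 - (r-e)^3)/6 := by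
  have h : ∀ t ∈ Set.uIcc r s, HasDerivAt (fun t : ℝ => (t-e)^3/6) ((t-e)^2/2) t := by
    intro t _
    have h1 := (((hasDerivAt_id' t).sub_const e).pow 3).div_const 6
    refine h1.congr_deriv ?_
    norm_num
    ring
  rw [intervalIntegral.integral_eq_sub_of_hasDerivAt h
    ((by fun_prop : Continuous fun t : ℝ => (t-e)^2/2).intervalIntegrable r s)]
  ring

lemma mom2 (r s e : ℝ) : ∫ t in r..s, (t-e)^2/2 * t
    = ((s-e)^3*(3*s+e) - (r-e)^3*(3*r+e))/24 := by
  have h : ∀ t ∈ Set.uIcc r s,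
      HasDerivAt (fun t : ℝ => (t-e)^3*(3*t+e)/24) ((t-e)^2/2 * t) t := by
    intro t _
    have h1 := ((((hasDerivAt_id' t).sub_const e).pow 3).mul
      (((hasDerivAt_id' t).const_mul 3).add_const e)).div_const 24
    refine h1.congr_deriv ?_
    norm_num
    ring
  rw [intervalIntegral.integral_eq_sub_of_hasDerivAt h
    ((by fun_prop : Continuous fun t : ℝ => (t-e)^2/2 * t).intervalIntegrable r s)]
  ring

lemma mom3 (r s e A B : ℝ) : ∫ t in r..s, (t-e)^2/2 * (t*A + (1-t)*B)
    = B*((s-e)^3-(r-e)^3)/6 + (A-B)*((s-e)^3*(3*s+e) - (r-e)^3*(3*r+e))/24 := by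
  have hfun : (fun t : ℝ => (t-e)^2/2 * (t*A+(1-t)*B))
      = fun t : ℝ => B*((t-e)^2/2) + (A-B)*((t-e)^2/2*t) := by
    funext t; ring
  rw [hfun, intervalIntegral.integral_add
      ((by fun_prop : Continuous fun t : ℝ => B*((t-e)^2/2)).intervalIntegrable r s)
      ((by fun_prop : Continuous fun t : ℝ => (A-B)*((t-e)^2/2*t)).intervalIntegrable r s),
    intervalIntegral.integral_const_mul, intervalIntegral.integral_const_mul, mom1, mom2]
  ring



set_option maxHeartbeats 2000000 in
/-- Theorem 11 of the paper: power-mean-type bound for |E(f;a,b;c,y,d)| with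
|f''|^q convex, q ≥ 1; the exponent 1 − 1/q plays the role of 1/p. -/
theorem stmt_7 (f f' f'' : ℝ → ℝ) (a b u v c y d q : ℝ) (hab : a < b)
(hua : u < a) (hbv : b < v)
    (hf' : ∀ x ∈ Set.Ioo u v, HasDerivAt f (f' x) x)
    (hf'' : ∀ x ∈ Set.Ioo u v, HasDerivAt f' (f'' x) x)
    (hint : IntervalIntegrable f'' MeasureTheory.volume a b)
    (hc : 0 ≤ c) (hcy : c ≤ y) (hyd : y ≤ d) (hd : d ≤ 1)
    (hy0 : 0 < y) (hy1 : y < 1)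
    (hq : 1 ≤ q)
    (hconv : ConvexOn ℝ (Set.Icc a b) (fun x => |f'' x| ^ q)) :
|(((c - y) ^ 2 - (d - y) ^ 2) / 2) * (a - b) * f' (y * a + (1 - y) * b)
      + (((d - 1) ^ 2 * f' a - c ^ 2 * f' b) / 2) * (a - b)
      + (c - d) * f (y * a + (1 - y) * b)
      + (d - 1) * f a - c * f b
      + (1 / (b - a)) * ∫ x in a..b, f x|
    ≤ ((b - a) ^ 2 / 6) *
        ((c ^ 3 - (c - y) ^ 3) ^ (1 - 1 / q) *
            (((c ^ 4 - (c - y) ^ 3 * (c + 3 * y)) * |f'' a| ^ q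
              + (4 * c ^ 3 - c ^ 4 + (c - y) ^ 3 * (c + 3 * y - 4)) * |f'' b| ^ q) / 4) ^ (1 / q)
          + ((d - y) ^ 3 - (d - 1) ^ 3) ^ (1 - 1 / q) *
            ((((d - y) ^ 3 * (d + 3 * y) - (d - 1) ^ 3 * (d + 3)) * |f'' a| ^ q
              + ((d - y) ^ 3 * (4 - d - 3 * y) + (d - 1) ^ 4) * |f'' b| ^ q) / 4) ^ (1 / q)) := by
  have hq0 : (0:ℝ) < q := lt_of_lt_of_le one_pos hq
  have hba : (0:ℝ) < b - a := sub_pos.2 hab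
  have haneb : a - b ≠ 0 := by intro h; rw [sub_eq_zero] at h; exact absurd h (ne_of_lt hab)
  set α := |f'' a| ^ q with hαdef
  set β := |f'' b| ^ q with hβdef
  have hα0 : 0 ≤ α := Real.rpow_nonneg (abs_nonneg _) q
  have hβ0 : 0 ≤ β := Real.rpow_nonneg (abs_nonneg _) q
  set σ : ℝ → ℝ := fun t => (a-b)*t + b with hσ
  have hσval : ∀ t : ℝ, σ t = (a-b)*t + b := fun t => by rw [hσ]
  have hmem : ∀ t ∈ Set.Icc (0:ℝ) 1, σ t ∈ Set.Ioo u v := by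
    intro t ht
    have h1 : 0 ≤ t := ht.1
    have h2 : t ≤ 1 := ht.2
    rw [hσval]
    constructor
    · nlinarith
    · nlinarith
  have hσd : ∀ t : ℝ, HasDerivAt σ (a-b) t := by
    intro t
    rw [hσ]
    simpa using ((hasDerivAt_id' t).const_mul (a-b)).add_const b
  set g : ℝ → ℝ := fun t => f (σ t) with hgdef
  set G1 : ℝ → ℝ := fun t => (a-b) * f' (σ t) with hG1def
  set G2 : ℝ → ℝ := fun t => (a-b)^2 * f'' (σ t) with hG2def
  have hgd : ∀ t ∈ Set.Icc (0:ℝ) 1, HasDerivAt g (G1 t) t := by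
    intro t ht
    have h1 := (hf' (σ t) (hmem t ht)).comp t (hσd t)
    rw [hgdef, hG1def]
    refine h1.congr_deriv ?_
    ring
  have hG1d : ∀ t ∈ Set.Icc (0:ℝ) 1, HasDerivAt G1 (G2 t) t := by
    intro t ht
    have h1 := ((hf'' (σ t) (hmem t ht)).comp t (hσd t)).const_mul (a-b)
    rw [hG1def, hG2def]
    refine h1.congr_deriv ?_
    ring
  -- integrability of G2
  have hifσ : IntervalIntegrable (fun t => f'' (σ t)) volume 0 1 := by
    have h1 := hint.comp_add_right b
    have h2 := h1.comp_mul_left (c := a-b)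
    rw [div_self haneb] at h2
    simp only [sub_self, zero_div] at h2
    have h3 := h2.symm
    simp only [hσ]
    exact h3
  have hiG2 : IntervalIntegrable G2 volume 0 1 := by
    have := hifσ.const_mul ((a-b)^2)
    simp only [hG2def]
    exact this
  have hsub0y : Set.uIcc (0:ℝ) y ⊆ Set.Icc 0 1 := by
    rw [Set.uIcc_of_le hy0.le]; exact Set.Icc_subset_Icc le_rfl hy1.le
  have hsuby1 : Set.uIcc y (1:ℝ) ⊆ Set.Icc 0 1 := by
    rw [Set.uIcc_of_le hy1.le]; exact Set.Icc_subset_Icc hy0.le le_rfl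
  have h01 : Set.uIcc (0:ℝ) 1 = Set.Icc 0 1 := Set.uIcc_of_le zero_le_one
  have hiG2a : IntervalIntegrable G2 volume 0 y := hiG2.mono_set (h01 ▸ hsub0y)
  have hiG2b : IntervalIntegrable G2 volume y 1 := hiG2.mono_set (h01 ▸ hsuby1)
  have hifσa : IntervalIntegrable (fun t => f'' (σ t)) volume 0 y :=
    hifσ.mono_set (h01 ▸ hsub0y)
  have hifσb : IntervalIntegrable (fun t => f'' (σ t)) volume y 1 :=
    hifσ.mono_set (h01 ▸ hsuby1)
  have hgC : ContinuousOn g (Set.Icc 0 1) :=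
    fun t ht => ((hgd t ht).continuousAt).continuousWithinAt
  have hG1C : ContinuousOn G1 (Set.Icc 0 1) :=
    fun t ht => ((hG1d t ht).continuousAt).continuousWithinAt
  have hiG1a : IntervalIntegrable G1 volume 0 y := (hG1C.mono hsub0y).intervalIntegrable
  have hiG1b : IntervalIntegrable G1 volume y 1 := (hG1C.mono hsuby1).intervalIntegrable
  have higa : IntervalIntegrable g volume 0 y := (hgC.mono hsub0y).intervalIntegrable
  have higb : IntervalIntegrable g volume y 1 := (hgC.mono hsuby1).intervalIntegrable
  -- integration by parts
  have ibp1 : ∫ t in (0:ℝ)..y, (t-c)^2/2 * G2 t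
      = (y-c)^2/2 * G1 y - (0-c)^2/2 * G1 0 - ∫ t in (0:ℝ)..y, (t-c) * G1 t := by
    apply intervalIntegral.integral_mul_deriv_eq_deriv_mul
    · intro x hx
      have h1 := (((hasDerivAt_id' x).sub_const c).pow 2).div_const 2
      refine h1.congr_deriv ?_
      norm_num
    · intro x hx; exact hG1d x (hsub0y hx)
    · exact ((by fun_prop : Continuous fun t : ℝ => t - c)).intervalIntegrable 0 y
    · exact hiG2a
  have ibp1' : ∫ t in (0:ℝ)..y, (t-c) * G1 t
      = (y-c) * g y - (0-c) * g 0 - ∫ t in (0:ℝ)..y, 1 * g t := by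
    apply intervalIntegral.integral_mul_deriv_eq_deriv_mul
    · intro x hx; exact (hasDerivAt_id' x).sub_const c
    · intro x hx; exact hgd x (hsub0y hx)
    · exact continuous_const.intervalIntegrable 0 y
    · exact hiG1a
  have ibp2 : ∫ t in y..(1:ℝ), (t-d)^2/2 * G2 t
      = (1-d)^2/2 * G1 1 - (y-d)^2/2 * G1 y - ∫ t in y..(1:ℝ), (t-d) * G1 t := by
    apply intervalIntegral.integral_mul_deriv_eq_deriv_mul
    · intro x hx
      have h1 := (((hasDerivAt_id' x).sub_const d).pow 2).div_const 2
      refine h1.congr_deriv ?_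
      norm_num
    · intro x hx; exact hG1d x (hsuby1 hx)
    · exact ((by fun_prop : Continuous fun t : ℝ => t - d)).intervalIntegrable y 1
    · exact hiG2b
  have ibp2' : ∫ t in y..(1:ℝ), (t-d) * G1 t
      = (1-d) * g 1 - (y-d) * g y - ∫ t in y..(1:ℝ), 1 * g t := by
    apply intervalIntegral.integral_mul_deriv_eq_deriv_mul
    · intro x hx; exact (hasDerivAt_id' x).sub_const d
    · intro x hx; exact hgd x (hsuby1 hx)
    · exact continuous_const.intervalIntegrable y 1
    · exact hiG1b
  -- change of variables and splitting
  have hsplit : (∫ t in (0:ℝ)..y, g t) + ∫ t in y..(1:ℝ), g t = ∫ t in (0:ℝ)..1, g t :=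
    intervalIntegral.integral_add_adjacent_intervals higa higb
  have hchg : ∫ t in (0:ℝ)..1, g t = (1/(b-a)) * ∫ x in a..b, f x := by
    simp only [hgdef, hσ]
    rw [intervalIntegral.integral_comp_mul_add f haneb b]
    have e1 : (a-b)*0 + b = b := by ring
    have e2 : (a-b)*1 + b = a := by ring
    rw [e1, e2, intervalIntegral.integral_symm, smul_eq_mul]
    field_simp
    ring
  -- endpoint values
  have ey : σ y = y*a + (1-y)*b := by rw [hσval]; ring
  have e0 : σ 0 = b := by rw [hσval]; ring
  have e1 : σ 1 = a := by rw [hσval]; ring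
  have hcomb : (∫ t in (0:ℝ)..y, g t) + ∫ t in y..(1:ℝ), g t
      = (1/(b-a)) * ∫ x in a..b, f x := by rw [hsplit, hchg]
  -- the key identity
  have key : (((c - y) ^ 2 - (d - y) ^ 2) / 2) * (a - b) * f' (y * a + (1 - y) * b)
      + (((d - 1) ^ 2 * f' a - c ^ 2 * f' b) / 2) * (a - b)
      + (c - d) * f (y * a + (1 - y) * b)
      + (d - 1) * f a - c * f b
      + (1 / (b - a)) * ∫ x in a..b, f x
      = (∫ t in (0:ℝ)..y, (t-c)^2/2 * G2 t) + ∫ t in y..(1:ℝ), (t-d)^2/2 * G2 t := by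
    rw [ibp1, ibp2, ibp1', ibp2']
    simp only [hgdef, hG1def, ey, e0, e1, one_mul]
    linear_combination (-1 : ℝ) * hcomb
  rw [key]
  -- pointwise convexity bound
  have hptw : ∀ t ∈ Set.Icc (0:ℝ) 1, |f'' (σ t)| ≤ (t*α + (1-t)*β) ^ (1/q) := by
    intro t ht
    have hmem' : σ t = t*a + (1-t)*b := by rw [hσval]; ring
    have hcv := hconv.2 (Set.left_mem_Icc.2 hab.le) (Set.right_mem_Icc.2 hab.le) ht.1
      (by linarith [ht.2] : (0:ℝ) ≤ 1 - t) (by ring)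
    simp only [smul_eq_mul] at hcv
    have h2 : |f'' (σ t)| ^ q ≤ t*α + (1-t)*β := by
      rw [hmem', hαdef, hβdef]; exact hcv
    calc |f'' (σ t)| = (|f'' (σ t)| ^ q) ^ (1/q) := by
          rw [← Real.rpow_mul (abs_nonneg _), mul_one_div, div_self (ne_of_gt hq0),
            Real.rpow_one]
      _ ≤ (t*α + (1-t)*β) ^ (1/q) :=
          Real.rpow_le_rpow (Real.rpow_nonneg (abs_nonneg _) q) h2 (by positivity)
  have habs2 : ∀ t : ℝ, |G2 t| = (b-a)^2 * |f'' (σ t)| := by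
    intro t
    rw [hG2def]
    show |(a-b)^2 * f'' (σ t)| = (b-a)^2 * |f'' (σ t)|
    rw [abs_mul, abs_of_nonneg (by positivity : (0:ℝ) ≤ (a-b)^2)]
    have : (a-b)^2 = (b-a)^2 := by ring
    rw [this]
  have h1C : Continuous (fun t : ℝ => t*α + (1-t)*β) := by fun_prop
  -- piece 1
  have step1 : |∫ t in (0:ℝ)..y, (t-c)^2/2 * G2 t|
      ≤ ((b-a)^2/6) * ((c ^ 3 - (c - y) ^ 3) ^ (1 - 1 / q) *
            (((c ^ 4 - (c - y) ^ 3 * (c + 3 * y)) * α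
              + (4 * c ^ 3 - c ^ 4 + (c - y) ^ 3 * (c + 3 * y - 4)) * β) / 4) ^ (1 / q)) := by
    have w1C : Continuous (fun t : ℝ => (t-c)^2/2) := by fun_prop
    have int1a : IntervalIntegrable (fun t => (t-c)^2/2 * |f'' (σ t)|) volume 0 y :=
      hifσa.abs.continuousOn_mul w1C.continuousOn
    have int1b : IntervalIntegrable (fun t => (t-c)^2/2 * (t*α+(1-t)*β)^(1/q)) volume 0 y :=
      (w1C.mul (h1C.rpow_const (fun x => Or.inr (by positivity)))).intervalIntegrable 0 y
    have s1 : |∫ t in (0:ℝ)..y, (t-c)^2/2 * G2 t| ≤ ∫ t in (0:ℝ)..y, |(t-c)^2/2 * G2 t| :=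
      intervalIntegral.abs_integral_le_integral_abs hy0.le
    have s2 : ∫ t in (0:ℝ)..y, |(t-c)^2/2 * G2 t|
        = (b-a)^2 * ∫ t in (0:ℝ)..y, (t-c)^2/2 * |f'' (σ t)| := by
      rw [← intervalIntegral.integral_const_mul]
      apply intervalIntegral.integral_congr
      intro t _
      show |(t-c)^2/2 * G2 t| = (b-a)^2 * ((t-c)^2/2 * |f'' (σ t)|)
      rw [abs_mul, abs_of_nonneg (by positivity : (0:ℝ) ≤ (t-c)^2/2), habs2 t]
      ring
    have s3 : ∫ t in (0:ℝ)..y, (t-c)^2/2 * |f'' (σ t)|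
        ≤ ∫ t in (0:ℝ)..y, (t-c)^2/2 * (t*α+(1-t)*β)^(1/q) := by
      apply intervalIntegral.integral_mono_on hy0.le int1a int1b
      intro t ht
      exact mul_le_mul_of_nonneg_left (hptw t ⟨ht.1, le_trans ht.2 hy1.le⟩) (by positivity)
    have s4 := holder_aux hy0.le hq (fun t => (t-c)^2/2) (fun t => t*α+(1-t)*β)
      w1C h1C (fun x _ => by positivity)
      (fun x hx => add_nonneg (mul_nonneg hx.1 hα0)
        (mul_nonneg (by linarith [hx.2, hy1.le] : (0:ℝ) ≤ 1 - x) hβ0))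
    have m1 : ∫ t in (0:ℝ)..y, (t-c)^2/2 = (c^3-(c-y)^3)/6 := by
      rw [mom1]; ring
    have m3 : ∫ t in (0:ℝ)..y, (t-c)^2/2 * (t*α+(1-t)*β)
        = ((c ^ 4 - (c - y) ^ 3 * (c + 3 * y)) * α
            + (4 * c ^ 3 - c ^ 4 + (c - y) ^ 3 * (c + 3 * y - 4)) * β)/24 := by
      rw [mom3]; ring
    have hX : 0 ≤ (c^3-(c-y)^3)/6 := by
      rw [← m1]
      exact intervalIntegral.integral_nonneg hy0.le (fun t _ => by positivity)
    have hS : 0 ≤ ((c ^ 4 - (c - y) ^ 3 * (c + 3 * y)) * α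
        + (4 * c ^ 3 - c ^ 4 + (c - y) ^ 3 * (c + 3 * y - 4)) * β)/24 := by
      rw [← m3]
      exact intervalIntegral.integral_nonneg hy0.le (fun t ht => mul_nonneg (by positivity)
        (add_nonneg (mul_nonneg ht.1 hα0)
          (mul_nonneg (by linarith [ht.2, hy1.le] : (0:ℝ) ≤ 1-t) hβ0)))
    rw [m1, m3] at s4
    have hX' : 0 ≤ c^3-(c-y)^3 := by linarith
    have hS' : 0 ≤ ((c ^ 4 - (c - y) ^ 3 * (c + 3 * y)) * α
        + (4 * c ^ 3 - c ^ 4 + (c - y) ^ 3 * (c + 3 * y - 4)) * β)/4 := by linarith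
    have ealg : ((c^3-(c-y)^3)/6) ^ (1-1/q)
        * ((((c ^ 4 - (c - y) ^ 3 * (c + 3 * y)) * α
            + (4 * c ^ 3 - c ^ 4 + (c - y) ^ 3 * (c + 3 * y - 4)) * β)/24)) ^ (1/q)
        = (1/6) * ((c ^ 3 - (c - y) ^ 3) ^ (1 - 1 / q) *
            (((c ^ 4 - (c - y) ^ 3 * (c + 3 * y)) * α
              + (4 * c ^ 3 - c ^ 4 + (c - y) ^ 3 * (c + 3 * y - 4)) * β) / 4) ^ (1 / q)) := by
      have e1 : (c^3-(c-y)^3)/6 = (c^3-(c-y)^3) * (1/6) := by ring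
      have e2 : (((c ^ 4 - (c - y) ^ 3 * (c + 3 * y)) * α
          + (4 * c ^ 3 - c ^ 4 + (c - y) ^ 3 * (c + 3 * y - 4)) * β)/24)
          = (((c ^ 4 - (c - y) ^ 3 * (c + 3 * y)) * α
          + (4 * c ^ 3 - c ^ 4 + (c - y) ^ 3 * (c + 3 * y - 4)) * β)/4) * (1/6) := by ring
      have e3 : (1/6 : ℝ) ^ (1-1/q) * (1/6 : ℝ) ^ (1/q) = 1/6 := by
        rw [← Real.rpow_add (by norm_num : (0:ℝ) < 1/6),
          show (1-1/q)+(1/q) = 1 by ring, Real.rpow_one]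
      rw [e1, e2, Real.mul_rpow hX' (by norm_num), Real.mul_rpow hS' (by norm_num)]
      set C := (1/6 : ℝ) ^ (1-1/q) with hC
      set D := (1/6 : ℝ) ^ (1/q) with hD
      set A := (c ^ 3 - (c - y) ^ 3) ^ (1 - 1 / q) with hA
      set B := (((c ^ 4 - (c - y) ^ 3 * (c + 3 * y)) * α
              + (4 * c ^ 3 - c ^ 4 + (c - y) ^ 3 * (c + 3 * y - 4)) * β) / 4) ^ (1 / q) with hB
      linear_combination A * B * e3
    calc |∫ t in (0:ℝ)..y, (t-c)^2/2 * G2 t|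
        ≤ ∫ t in (0:ℝ)..y, |(t-c)^2/2 * G2 t| := s1
      _ = (b-a)^2 * ∫ t in (0:ℝ)..y, (t-c)^2/2 * |f'' (σ t)| := s2
      _ ≤ (b-a)^2 * ∫ t in (0:ℝ)..y, (t-c)^2/2 * (t*α+(1-t)*β)^(1/q) :=
          mul_le_mul_of_nonneg_left s3 (by positivity)
      _ ≤ (b-a)^2 * (((c^3-(c-y)^3)/6) ^ (1-1/q)
            * ((((c ^ 4 - (c - y) ^ 3 * (c + 3 * y)) * α
              + (4 * c ^ 3 - c ^ 4 + (c - y) ^ 3 * (c + 3 * y - 4)) * β)/24)) ^ (1/q)) :=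
          mul_le_mul_of_nonneg_left s4 (by positivity)
      _ = _ := by rw [ealg]; ring
  -- piece 2
  have step2 : |∫ t in y..(1:ℝ), (t-d)^2/2 * G2 t|
      ≤ ((b-a)^2/6) * (((d - y) ^ 3 - (d - 1) ^ 3) ^ (1 - 1 / q) *
            ((((d - y) ^ 3 * (d + 3 * y) - (d - 1) ^ 3 * (d + 3)) * α
              + ((d - y) ^ 3 * (4 - d - 3 * y) + (d - 1) ^ 4) * β) / 4) ^ (1 / q)) := by
    have w2C : Continuous (fun t : ℝ => (t-d)^2/2) := by fun_prop
    have int2a : IntervalIntegrable (fun t => (t-d)^2/2 * |f'' (σ t)|) volume y 1 :=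
      hifσb.abs.continuousOn_mul w2C.continuousOn
    have int2b : IntervalIntegrable (fun t => (t-d)^2/2 * (t*α+(1-t)*β)^(1/q)) volume y 1 :=
      (w2C.mul (h1C.rpow_const (fun x => Or.inr (by positivity)))).intervalIntegrable y 1
    have s1 : |∫ t in y..(1:ℝ), (t-d)^2/2 * G2 t| ≤ ∫ t in y..(1:ℝ), |(t-d)^2/2 * G2 t| :=
      intervalIntegral.abs_integral_le_integral_abs hy1.le
    have s2 : ∫ t in y..(1:ℝ), |(t-d)^2/2 * G2 t|
        = (b-a)^2 * ∫ t in y..(1:ℝ), (t-d)^2/2 * |f'' (σ t)| := by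
      rw [← intervalIntegral.integral_const_mul]
      apply intervalIntegral.integral_congr
      intro t _
      show |(t-d)^2/2 * G2 t| = (b-a)^2 * ((t-d)^2/2 * |f'' (σ t)|)
      rw [abs_mul, abs_of_nonneg (by positivity : (0:ℝ) ≤ (t-d)^2/2), habs2 t]
      ring
    have s3 : ∫ t in y..(1:ℝ), (t-d)^2/2 * |f'' (σ t)|
        ≤ ∫ t in y..(1:ℝ), (t-d)^2/2 * (t*α+(1-t)*β)^(1/q) := by
      apply intervalIntegral.integral_mono_on hy1.le int2a int2b
      intro t ht
      exact mul_le_mul_of_nonneg_left (hptw t ⟨le_trans hy0.le ht.1, ht.2⟩) (by positivity)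
    have s4 := holder_aux hy1.le hq (fun t => (t-d)^2/2) (fun t => t*α+(1-t)*β)
      w2C h1C (fun x _ => by positivity)
      (fun x hx => add_nonneg (mul_nonneg (le_trans hy0.le hx.1) hα0)
        (mul_nonneg (by linarith [hx.2] : (0:ℝ) ≤ 1 - x) hβ0))
    have m1 : ∫ t in y..(1:ℝ), (t-d)^2/2 = ((d-y)^3-(d-1)^3)/6 := by
      rw [mom1]; ring
    have m3 : ∫ t in y..(1:ℝ), (t-d)^2/2 * (t*α+(1-t)*β)
        = (((d - y) ^ 3 * (d + 3 * y) - (d - 1) ^ 3 * (d + 3)) * α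
            + ((d - y) ^ 3 * (4 - d - 3 * y) + (d - 1) ^ 4) * β)/24 := by
      rw [mom3]; ring
    have hX : 0 ≤ ((d-y)^3-(d-1)^3)/6 := by
      rw [← m1]
      exact intervalIntegral.integral_nonneg hy1.le (fun t _ => by positivity)
    have hS : 0 ≤ (((d - y) ^ 3 * (d + 3 * y) - (d - 1) ^ 3 * (d + 3)) * α
        + ((d - y) ^ 3 * (4 - d - 3 * y) + (d - 1) ^ 4) * β)/24 := by
      rw [← m3]
      exact intervalIntegral.integral_nonneg hy1.le (fun t ht => mul_nonneg (by positivity)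
        (add_nonneg (mul_nonneg (le_trans hy0.le ht.1) hα0)
          (mul_nonneg (by linarith [ht.2] : (0:ℝ) ≤ 1-t) hβ0)))
    rw [m1, m3] at s4
    have hX' : 0 ≤ (d-y)^3-(d-1)^3 := by linarith
    have hS' : 0 ≤ (((d - y) ^ 3 * (d + 3 * y) - (d - 1) ^ 3 * (d + 3)) * α
        + ((d - y) ^ 3 * (4 - d - 3 * y) + (d - 1) ^ 4) * β)/4 := by linarith
    have ealg : (((d-y)^3-(d-1)^3)/6) ^ (1-1/q)
        * (((((d - y) ^ 3 * (d + 3 * y) - (d - 1) ^ 3 * (d + 3)) * α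
            + ((d - y) ^ 3 * (4 - d - 3 * y) + (d - 1) ^ 4) * β)/24)) ^ (1/q)
        = (1/6) * (((d - y) ^ 3 - (d - 1) ^ 3) ^ (1 - 1 / q) *
            ((((d - y) ^ 3 * (d + 3 * y) - (d - 1) ^ 3 * (d + 3)) * α
              + ((d - y) ^ 3 * (4 - d - 3 * y) + (d - 1) ^ 4) * β) / 4) ^ (1 / q)) := by
      have e1 : ((d-y)^3-(d-1)^3)/6 = ((d-y)^3-(d-1)^3) * (1/6) := by ring
      have e2 : ((((d - y) ^ 3 * (d + 3 * y) - (d - 1) ^ 3 * (d + 3)) * α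
          + ((d - y) ^ 3 * (4 - d - 3 * y) + (d - 1) ^ 4) * β)/24)
          = ((((d - y) ^ 3 * (d + 3 * y) - (d - 1) ^ 3 * (d + 3)) * α
          + ((d - y) ^ 3 * (4 - d - 3 * y) + (d - 1) ^ 4) * β)/4) * (1/6) := by ring
      have e3 : (1/6 : ℝ) ^ (1-1/q) * (1/6 : ℝ) ^ (1/q) = 1/6 := by
        rw [← Real.rpow_add (by norm_num : (0:ℝ) < 1/6),
          show (1-1/q)+(1/q) = 1 by ring, Real.rpow_one]
      rw [e1, e2, Real.mul_rpow hX' (by norm_num), Real.mul_rpow hS' (by norm_num)]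
      set C := (1/6 : ℝ) ^ (1-1/q) with hC
      set D := (1/6 : ℝ) ^ (1/q) with hD
      set A := ((d - y) ^ 3 - (d - 1) ^ 3) ^ (1 - 1 / q) with hA
      set B := ((((d - y) ^ 3 * (d + 3 * y) - (d - 1) ^ 3 * (d + 3)) * α
              + ((d - y) ^ 3 * (4 - d - 3 * y) + (d - 1) ^ 4) * β) / 4) ^ (1 / q) with hB
      linear_combination A * B * e3
    calc |∫ t in y..(1:ℝ), (t-d)^2/2 * G2 t|
        ≤ ∫ t in y..(1:ℝ), |(t-d)^2/2 * G2 t| := s1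
      _ = (b-a)^2 * ∫ t in y..(1:ℝ), (t-d)^2/2 * |f'' (σ t)| := s2
      _ ≤ (b-a)^2 * ∫ t in y..(1:ℝ), (t-d)^2/2 * (t*α+(1-t)*β)^(1/q) :=
          mul_le_mul_of_nonneg_left s3 (by positivity)
      _ ≤ (b-a)^2 * ((((d-y)^3-(d-1)^3)/6) ^ (1-1/q)
            * (((((d - y) ^ 3 * (d + 3 * y) - (d - 1) ^ 3 * (d + 3)) * α
              + ((d - y) ^ 3 * (4 - d - 3 * y) + (d - 1) ^ 4) * β)/24)) ^ (1/q)) :=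
          mul_le_mul_of_nonneg_left s4 (by positivity)
      _ = _ := by rw [ealg]; ring
  calc |(∫ t in (0:ℝ)..y, (t-c)^2/2 * G2 t) + ∫ t in y..(1:ℝ), (t-d)^2/2 * G2 t|
      ≤ |∫ t in (0:ℝ)..y, (t-c)^2/2 * G2 t| + |∫ t in y..(1:ℝ), (t-d)^2/2 * G2 t| :=
        abs_add_le _ _
    _ ≤ _ := add_le_add step1 step2
    _ = _ := by rw [← mul_add]
end

section
/- Let a, b be real numbers with 0 < a < b and let n be a natural number with n > 2. Then |L_n^n(a,b) − A(a,b)^n| ≤ n·(n−1)·((b−a)²/48)·(a^(n−2) + b^(n−2)), where L_n^n(a,b) = (b^(n+1) − a^(n+1))/((n+1)·(b−a)) and A(a,b) = (a+b)/2. -/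
open Set intervalIntegral

private lemma pow_interp {k : ℕ} {a b x : ℝ} (ha : 0 ≤ a) (hab : a < b)
    (hx : x ∈ Set.Icc a b) : x ^ k * (b - a) ≤ (b - x) * a ^ k + (x - a) * b ^ k := by
  obtain ⟨hax, hxb⟩ := hx
  have hd : (0:ℝ) < b - a := by linarith
  have hl : 0 ≤ (b - x) / (b - a) := div_nonneg (by linarith) hd.le
  have hu : 0 ≤ (x - a) / (b - a) := div_nonneg (by linarith) hd.le
  have hsum : (b - x) / (b - a) + (x - a) / (b - a) = 1 := by
    field_simp
    ring
  have h := (convexOn_pow (𝕜 := ℝ) k).2 (Set.mem_Ici.mpr ha)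
    (Set.mem_Ici.mpr (ha.trans hab.le)) hl hu hsum
  simp only [smul_eq_mul] at h
  have hx' : (b - x) / (b - a) * a + (x - a) / (b - a) * b = x := by
    field_simp
    ring
  rw [hx'] at h
  have h2 := mul_le_mul_of_nonneg_right h hd.le
  calc x ^ k * (b - a) ≤ ((b - x) / (b - a) * a ^ k + (x - a) / (b - a) * b ^ k) * (b - a) := h2
    _ = (b - x) * a ^ k + (x - a) * b ^ k := by field_simp

private lemma tangent_pow (j : ℕ) {m x : ℝ} (hm : 0 < m) (hx : 0 ≤ x) :
    m ^ (j + 1) + ((j : ℝ) + 1) * m ^ j * (x - m) ≤ x ^ (j + 1) := by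
  have ht : (-2:ℝ) ≤ x / m - 1 := by
    have : 0 ≤ x / m := div_nonneg hx hm.le
    linarith
  have h := one_add_mul_le_pow ht (j + 1)
  have hmp : (0:ℝ) < m ^ (j + 1) := pow_pos hm _
  have h2 := mul_le_mul_of_nonneg_right h hmp.le
  have hxm : (1 + (x / m - 1)) ^ (j + 1) * m ^ (j + 1) = x ^ (j + 1) := by
    rw [show (1 + (x / m - 1)) = x / m by ring, div_pow, div_mul_cancel₀]
    exact pow_ne_zero _ hm.ne'
  rw [hxm] at h2
  refine le_trans (le_of_eq ?_) h2
  have hmne : m ≠ 0 := hm.ne'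
  push_cast
  field_simp
  ring

/-- If `f m = 0`, `f' m = 0`, and `f'' ≥ 0` on `[a,b]`, then `f ≥ 0` on `[a,b]`. -/
private lemma nonneg_of_deriv2 {a b m : ℝ} (f g g' : ℝ → ℝ) (hm : m ∈ Set.Icc a b)
    (hf : ∀ y, HasDerivAt f (g y) y) (hg : ∀ y, HasDerivAt g (g' y) y)
    (hg'0 : ∀ y ∈ Set.Icc a b, 0 ≤ g' y) (hgm : g m = 0) (hfm : f m = 0) :
    ∀ x ∈ Set.Icc a b, 0 ≤ f x := by
  have hgmono : MonotoneOn g (Set.Icc a b) :=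
    monotoneOn_of_deriv_nonneg (convex_Icc a b)
      (fun y _ => (hg y).continuousAt.continuousWithinAt)
      (fun y hy => (hg y).differentiableAt.differentiableWithinAt)
      (fun y hy => by
        rw [(hg y).deriv]; exact hg'0 y (interior_subset hy))
  intro x hx
  rcases le_total x m with hxm | hmx
  · have hanti : AntitoneOn f (Set.Icc a m) :=
      antitoneOn_of_deriv_nonpos (convex_Icc a m)
        (fun y _ => (hf y).continuousAt.continuousWithinAt)
        (fun y hy => (hf y).differentiableAt.differentiableWithinAt)
        (fun y hy => by
          rw [(hf y).deriv]
          have hy' : y ∈ Set.Icc a m := interior_subset hy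
          have hyab : y ∈ Set.Icc a b := ⟨hy'.1, hy'.2.trans hm.2⟩
          have := hgmono hyab hm hy'.2
          linarith)
    have := hanti ⟨hx.1, hxm⟩ ⟨hm.1, le_rfl⟩ hxm
    linarith
  · have hmono : MonotoneOn f (Set.Icc m b) :=
      monotoneOn_of_deriv_nonneg (convex_Icc m b)
        (fun y _ => (hf y).continuousAt.continuousWithinAt)
        (fun y hy => (hf y).differentiableAt.differentiableWithinAt)
        (fun y hy => by
          rw [(hf y).deriv]
          have hy' : y ∈ Set.Icc m b := interior_subset hy
          have hyab : y ∈ Set.Icc a b := ⟨hm.1.trans hy'.1, hy'.2⟩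
          have := hgmono hm hyab hy'.1
          linarith)
    have := hmono ⟨le_rfl, hm.2⟩ ⟨hmx, hx.2⟩ hmx
    linarith

private lemma cubic_ge_pow (k : ℕ) {a b : ℝ} (c2 c3 m : ℝ) (ham : a ≤ m) (hmb : m ≤ b)
    (hdd : ∀ y ∈ Set.Icc a b, ((k:ℝ)+2) * ((k:ℝ)+1) * y ^ k ≤ 2 * c2 + 6 * c3 * (y - m)) :
    ∀ x ∈ Set.Icc a b,
      x ^ (k+2) ≤ m ^ (k+2) + (((k:ℝ)+2) * m ^ (k+1)) * (x - m)
        + c2 * (x - m) ^ 2 + c3 * (x - m) ^ 3 := by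
  set f : ℝ → ℝ := fun y => m ^ (k+2) + (((k:ℝ)+2) * m ^ (k+1)) * (y - m)
        + c2 * (y - m) ^ 2 + c3 * (y - m) ^ 3 - y ^ (k+2) with hfdef
  set g : ℝ → ℝ := fun y => (((k:ℝ)+2) * m ^ (k+1))
        + 2 * c2 * (y - m) + 3 * c3 * (y - m) ^ 2 - ((k:ℝ)+2) * y ^ (k+1) with hgdef
  set g' : ℝ → ℝ := fun y => 2 * c2 + 6 * c3 * (y - m) - ((k:ℝ)+2) * ((k:ℝ)+1) * y ^ k
    with hg'def
  have h1 : ∀ y : ℝ, HasDerivAt (fun y : ℝ => y - m) 1 y := fun y => by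
    simpa using (hasDerivAt_id y).sub_const m
  have hpow : ∀ (p : ℕ) (y : ℝ), HasDerivAt (fun y : ℝ => y ^ (p+1))
      (((p:ℝ)+1) * y ^ p) y := fun p y => by
    have := hasDerivAt_pow (p+1) y
    simpa using this
  have hf : ∀ y, HasDerivAt f (g y) y := by
    intro y
    have t1 : HasDerivAt (fun y : ℝ => (((k:ℝ)+2) * m ^ (k+1)) * (y - m))
        ((((k:ℝ)+2) * m ^ (k+1)) * 1) y := (h1 y).const_mul _
    have t2 : HasDerivAt (fun y : ℝ => c2 * (y - m) ^ 2) (c2 * (2 * (y - m) ^ 1 * 1)) y :=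
      ((h1 y).pow 2).const_mul c2
    have t3 : HasDerivAt (fun y : ℝ => c3 * (y - m) ^ 3) (c3 * (3 * (y - m) ^ 2 * 1)) y :=
      ((h1 y).pow 3).const_mul c3
    have total := ((((hasDerivAt_const y (m ^ (k+2))).add t1).add t2).add t3).sub
      (hpow (k+1) y)
    refine HasDerivAt.congr_deriv total ?_
    push_cast
    ring
  have hg : ∀ y, HasDerivAt g (g' y) y := by
    intro y
    have t2 : HasDerivAt (fun y : ℝ => 2 * c2 * (y - m)) (2 * c2 * 1) y := (h1 y).const_mul _
    have t3 : HasDerivAt (fun y : ℝ => 3 * c3 * (y - m) ^ 2) (3 * c3 * (2 * (y - m) ^ 1 * 1)) y :=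
      ((h1 y).pow 2).const_mul _
    have tp : HasDerivAt (fun y : ℝ => ((k:ℝ)+2) * y ^ (k+1))
        (((k:ℝ)+2) * (((k:ℝ)+1) * y ^ k)) y := (hpow k y).const_mul _
    have total := (((hasDerivAt_const y (((k:ℝ)+2) * m ^ (k+1))).add t2).add t3).sub tp
    refine HasDerivAt.congr_deriv total ?_
    ring
  have hmem : m ∈ Set.Icc a b := ⟨ham, hmb⟩
  have hgm : g m = 0 := by simp [hgdef]
  have hfm : f m = 0 := by simp [hfdef]
  have hg'0 : ∀ y ∈ Set.Icc a b, 0 ≤ g' y := by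
    intro y hy
    have := hdd y hy
    simp only [hg'def]
    linarith
  intro x hx
  have := nonneg_of_deriv2 f g g' hmem hf hg hg'0 hgm hfm x hx
  simp only [hfdef] at this
  linarith

private lemma int_cubic (a b c0 c1 c2 c3 : ℝ) :
    (∫ x in a..b, (c0 + c1 * x + c2 * x ^ 2 + c3 * x ^ 3))
      = c0 * (b - a) + c1 * (b ^ 2 - a ^ 2) / 2 + c2 * (b ^ 3 - a ^ 3) / 3
        + c3 * (b ^ 4 - a ^ 4) / 4 := by
  have i0 : IntervalIntegrable (fun _ : ℝ => c0) MeasureTheory.volume a b :=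
    intervalIntegrable_const
  have i1 : IntervalIntegrable (fun x : ℝ => c1 * x) MeasureTheory.volume a b :=
    (continuous_const.mul continuous_id).intervalIntegrable a b
  have i2 : IntervalIntegrable (fun x : ℝ => c2 * x ^ 2) MeasureTheory.volume a b :=
    (continuous_const.mul (continuous_pow 2)).intervalIntegrable a b
  have i3 : IntervalIntegrable (fun x : ℝ => c3 * x ^ 3) MeasureTheory.volume a b :=
    (continuous_const.mul (continuous_pow 3)).intervalIntegrable a b
  rw [integral_add ((i0.add i1).add i2) i3, integral_add (i0.add i1) i2, integral_add i0 i1,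
    integral_const, integral_const_mul, integral_const_mul, integral_const_mul,
    integral_id, integral_pow, integral_pow]
  simp only [smul_eq_mul]
  push_cast
  ring

private lemma int_shift (a b m c0 c1 c2 c3 : ℝ) :
    (∫ x in a..b, (c0 + c1 * (x - m) + c2 * (x - m) ^ 2 + c3 * (x - m) ^ 3))
      = c0 * (b - a) + c1 * ((b - m) ^ 2 - (a - m) ^ 2) / 2
        + c2 * ((b - m) ^ 3 - (a - m) ^ 3) / 3 + c3 * ((b - m) ^ 4 - (a - m) ^ 4) / 4 := by
  have := integral_comp_sub_right (a := a) (b := b)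
    (fun y : ℝ => c0 + c1 * y + c2 * y ^ 2 + c3 * y ^ 3) m
  rw [this, int_cubic]
  ring

/-- Proposition 12 of the paper (means version):
|L_n^n(a,b) − A(a,b)^n| ≤ n(n−1)((b−a)²/48)(a^(n−2)+b^(n−2)). -/
theorem stmt_10 (a b : ℝ) (n : ℕ) (ha : 0 < a) (hab : a < b) (hn : 2 < n) :
    |(b ^ (n + 1) - a ^ (n + 1)) / ((n + 1) * (b - a)) - ((a + b) / 2) ^ n|
      ≤ (n : ℝ) * ((n : ℝ) - 1) * ((b - a) ^ 2 / 48) * (a ^ (n - 2) + b ^ (n - 2)) := by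
  obtain ⟨k, rfl⟩ : ∃ k, n = k + 2 := ⟨n - 2, by omega⟩
  have hd : (0:ℝ) < b - a := by linarith
  set m : ℝ := (a + b) / 2 with hm
  have ham : a ≤ m := by rw [hm]; linarith
  have hmb : m ≤ b := by rw [hm]; linarith
  have hm0 : 0 < m := by rw [hm]; linarith
  have hi : IntervalIntegrable (fun x : ℝ => x ^ (k+2)) MeasureTheory.volume a b :=
    (continuous_pow _).intervalIntegrable a b
  -- lower bound
  have hlow : m ^ (k+2) * (b - a) ≤ ∫ x in a..b, x ^ (k+2) := by
    have hmono := integral_mono_on (μ := MeasureTheory.volume) (a := a) (b := b) hab.le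
      (f := fun x : ℝ => m ^ (k+2) + (((k:ℝ)+2) * m ^ (k+1)) * (x - m)
        + 0 * (x - m) ^ 2 + 0 * (x - m) ^ 3)
      (g := fun x : ℝ => x ^ (k+2)) ((by fun_prop : Continuous _).intervalIntegrable a b) hi
      (fun x hx => by
        have := tangent_pow (k+1) hm0 (ha.le.trans hx.1)
        push_cast at this ⊢
        linarith)
    rw [int_shift] at hmono
    calc m ^ (k+2) * (b - a)
        = m ^ (k+2) * (b - a) + (((k:ℝ)+2) * m ^ (k+1)) * ((b - m) ^ 2 - (a - m) ^ 2) / 2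
          + 0 * ((b - m) ^ 3 - (a - m) ^ 3) / 3 + 0 * ((b - m) ^ 4 - (a - m) ^ 4) / 4 := by
          rw [hm]; ring
      _ ≤ _ := hmono
  -- upper bound
  set c2 : ℝ := ((k:ℝ)+2) * ((k:ℝ)+1) * (a ^ k + b ^ k) / 4 with hc2
  set c3 : ℝ := ((k:ℝ)+2) * ((k:ℝ)+1) * (b ^ k - a ^ k) / (6 * (b - a)) with hc3
  have hdd : ∀ y ∈ Set.Icc a b, ((k:ℝ)+2) * ((k:ℝ)+1) * y ^ k
      ≤ 2 * c2 + 6 * c3 * (y - m) := by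
    intro y hy
    have hP := pow_interp (k := k) ha.le hab hy
    have hk2 : (0:ℝ) ≤ ((k:ℝ)+2) * ((k:ℝ)+1) := by positivity
    have hyk : y ^ k * (b - a) ≤ (b - y) * a ^ k + (y - a) * b ^ k := hP
    have key : y ^ k ≤ (a ^ k + b ^ k) / 2 + (b ^ k - a ^ k) / (b - a) * (y - m) := by
      have h2 : (a ^ k + b ^ k) / 2 + (b ^ k - a ^ k) / (b - a) * (y - m)
          = ((b - y) * a ^ k + (y - a) * b ^ k) / (b - a) := by
        rw [hm]; field_simp; ring
      rw [h2, le_div_iff₀ hd]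
      linarith
    have := mul_le_mul_of_nonneg_left key hk2
    calc ((k:ℝ)+2) * ((k:ℝ)+1) * y ^ k
        ≤ ((k:ℝ)+2) * ((k:ℝ)+1) * ((a ^ k + b ^ k) / 2 + (b ^ k - a ^ k) / (b - a) * (y - m)) :=
          this
      _ = 2 * c2 + 6 * c3 * (y - m) := by
          rw [hc2, hc3]
          field_simp
          ring
  have hup : (∫ x in a..b, x ^ (k+2))
      ≤ m ^ (k+2) * (b - a) + ((k:ℝ)+2) * ((k:ℝ)+1) * (a ^ k + b ^ k) * (b - a) ^ 3 / 48 := by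
    have hmono := integral_mono_on (μ := MeasureTheory.volume) (a := a) (b := b) hab.le hi
      (f := fun x : ℝ => x ^ (k+2))
      (g := fun x : ℝ => m ^ (k+2) + (((k:ℝ)+2) * m ^ (k+1)) * (x - m)
        + c2 * (x - m) ^ 2 + c3 * (x - m) ^ 3)
      ((by fun_prop : Continuous _).intervalIntegrable a b)
      (cubic_ge_pow k c2 c3 m ham hmb hdd)
    rw [int_shift] at hmono
    calc (∫ x in a..b, x ^ (k+2)) ≤ _ := hmono
      _ = m ^ (k+2) * (b - a) + ((k:ℝ)+2) * ((k:ℝ)+1) * (a ^ k + b ^ k) * (b - a) ^ 3 / 48 := by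
          rw [hc2, hc3, hm]
          field_simp
          ring
  -- assemble
  rw [show k + 2 - 2 = k by omega]
  have hLdiv : (b ^ (k + 2 + 1) - a ^ (k + 2 + 1)) / ((((k+2:ℕ)):ℝ) + 1) / (b - a)
      = (∫ x in a..b, x ^ (k+2)) / (b - a) := by
    rw [integral_pow]
  have hLdiv2 : (b ^ (k + 2 + 1) - a ^ (k + 2 + 1)) / (((((k+2:ℕ)):ℝ) + 1) * (b - a))
      = (∫ x in a..b, x ^ (k+2)) / (b - a) := by
    rw [← hLdiv, div_div]
  rw [hLdiv2, abs_le]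
  have hR0 : (0:ℝ) ≤ (((k+2:ℕ)):ℝ) * ((((k+2:ℕ)):ℝ) - 1) * ((b - a) ^ 2 / 48)
      * (a ^ k + b ^ k) := by
    have e : (((k+2:ℕ)):ℝ) - 1 = (k:ℝ) + 1 := by push_cast; ring
    have e2 : (((k+2:ℕ)):ℝ) = (k:ℝ) + 2 := by push_cast; ring
    have p1 : (0:ℝ) ≤ a ^ k + b ^ k :=
      add_nonneg (pow_nonneg ha.le k) (pow_nonneg (ha.le.trans hab.le) k)
    have p2 : (0:ℝ) ≤ (b - a) ^ 2 / 48 := by positivity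
    have p3 : (0:ℝ) ≤ ((k:ℝ) + 2) * ((k:ℝ) + 1) := by positivity
    rw [e, e2]
    exact mul_nonneg (mul_nonneg p3 p2) p1
  constructor
  · have h1 : m ^ (k+2) ≤ (∫ x in a..b, x ^ (k+2)) / (b - a) := (le_div_iff₀ hd).mpr hlow
    linarith
  · have h2 : (∫ x in a..b, x ^ (k+2)) / (b - a)
        ≤ m ^ (k+2) + ((k:ℝ)+2) * ((k:ℝ)+1) * (a ^ k + b ^ k) * (b - a) ^ 2 / 48 := by
      rw [div_le_iff₀ hd]
      exact hup.trans (le_of_eq (by ring))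
    have e3 : (((k+2:ℕ)):ℝ) * ((((k+2:ℕ)):ℝ) - 1) * ((b - a) ^ 2 / 48) * (a ^ k + b ^ k)
        = ((k:ℝ)+2) * ((k:ℝ)+1) * (a ^ k + b ^ k) * (b - a) ^ 2 / 48 := by
      push_cast; ring
    rw [e3]
    linarith
end
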